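/- arXiv:1811.11981 — 5 statements merged into one kernel-verified Lean document; each statement's English description precedes it below -/
import Mathlib

section
/- If X1, ..., Xn are random variables with distributions F1, ..., Fn respectively, then the distribution of X1 + ... + Xn is dominated in convex order by the distribution F1 ⊕ ... ⊕ Fn, i.e., the distribution whose quantile function is the sum of the quantile functions of F1, ..., Fn. -/
open MeasureTheory ProbabilityTheory Set

/-- The uniform distribution on `[a, b]`. -/
noncomputable def unif (a b : ℝ) : Measure ℝ :=
  (ENNReal.ofReal (b - a))⁻¹ • (volume.restrict (Set.Icc a b))

/-- `F` is smaller than `G` in convex order. -/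
def ConvexOrder (F G : Measure ℝ) : Prop :=
  ∀ φ : ℝ → ℝ, ConvexOn ℝ Set.univ φ → Integrable φ F → Integrable φ G →
    ∫ x, φ x ∂F ≤ ∫ x, φ x ∂G

/-- The set of possible distributions of `X 1 + ... + X n` with `X i ~ Fs i`. -/
def Dset (n : ℕ) (Fs : Fin n → Measure ℝ) : Set (Measure ℝ) :=
  {G | ∃ (Ω : Type) (_ : MeasureSpace Ω),
    IsProbabilityMeasure (ℙ : Measure Ω) ∧
    ∃ X : Fin n → Ω → ℝ, (∀ i, Measurable (X i)) ∧
      (∀ i, Measure.map (X i) ℙ = Fs i) ∧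
      Measure.map (fun ω => ∑ i, X i ω) ℙ = G}

/-- The quantile (left-continuous inverse cdf) of a distribution. -/
noncomputable def quantile (F : Measure ℝ) (t : ℝ) : ℝ :=
  sInf {x : ℝ | t ≤ (F (Set.Iic x)).toReal}

/-- `F` is the distribution of `X + Y` for some `X ~ μ`, `Y ~ ν`. -/
def IsSumDist (μ ν F : Measure ℝ) : Prop :=
  ∃ (Ω : Type) (_ : MeasureSpace Ω), IsProbabilityMeasure (ℙ : Measure Ω) ∧
    ∃ X Y : Ω → ℝ, Measurable X ∧ Measurable Y ∧
      Measure.map X ℙ = μ ∧ Measure.map Y ℙ = ν ∧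
      Measure.map (fun ω => X ω + Y ω) ℙ = F

open Filter



section A
variable {F : Measure ℝ} [IsProbabilityMeasure F]

lemma cdf_mono : Monotone (fun x => (F (Iic x)).toReal) := fun a b hab =>
  ENNReal.toReal_mono (measure_ne_top _ _) (measure_mono (Iic_subset_Iic.2 hab))

lemma cdf_tendsto_one : Filter.Tendsto (fun n : ℕ => (F (Iic (n:ℝ))).toReal)
    Filter.atTop (nhds 1) := by
  have h1 : Filter.Tendsto (fun n : ℕ => F (Iic (n:ℝ))) Filter.atTop (nhds (F univ)) := by
    have := tendsto_measure_iUnion_atTop (μ := F) (s := fun n : ℕ => Iic (n:ℝ))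
      (fun a b hab => Iic_subset_Iic.2 (by exact_mod_cast hab))
    have hU : ⋃ n : ℕ, Iic ((n:ℝ)) = univ := by
      ext x; simp only [mem_iUnion, mem_Iic, mem_univ, iff_true]
      obtain ⟨n, hn⟩ := exists_nat_ge x; exact ⟨n, hn⟩
    rwa [hU] at this
  rw [measure_univ] at h1
  have := (ENNReal.tendsto_toReal (by simp)).comp h1
  simpa [Function.comp_def] using this

lemma cdf_tendsto_zero : Filter.Tendsto (fun n : ℕ => (F (Iic (-(n:ℝ)))).toReal)
    Filter.atTop (nhds 0) := by
  have h1 : Filter.Tendsto (fun n : ℕ => F (Iic (-(n:ℝ)))) Filter.atTop (nhds (F (⋂ n : ℕ, Iic (-(n:ℝ))))) :=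
    tendsto_measure_iInter_atTop (fun n => (measurableSet_Iic).nullMeasurableSet)
      (fun a b hab => Iic_subset_Iic.2 (neg_le_neg (Nat.cast_le.2 hab)))
      ⟨0, measure_ne_top _ _⟩
  have hI : ⋂ n : ℕ, Iic (-(n:ℝ)) = ∅ := by
    ext x; simp only [mem_iInter, mem_Iic, mem_empty_iff_false, iff_false, not_forall]
    obtain ⟨n, hn⟩ := exists_nat_gt (-x)
    exact ⟨n, by push_neg; linarith⟩
  rw [hI, measure_empty] at h1
  have := (ENNReal.tendsto_toReal (by simp)).comp h1
  simpa [Function.comp_def] using this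

lemma quantile_set_nonempty {t : ℝ} (ht1 : t < 1) :
    {x : ℝ | t ≤ (F (Iic x)).toReal}.Nonempty := by
  have := cdf_tendsto_one (F := F)
  have h := this.eventually_const_lt ht1
  obtain ⟨n, hn⟩ := h.exists
  exact ⟨n, le_of_lt hn⟩

lemma quantile_set_bddBelow {t : ℝ} (ht0 : 0 < t) :
    BddBelow {x : ℝ | t ≤ (F (Iic x)).toReal} := by
  have := cdf_tendsto_zero (F := F)
  obtain ⟨n, hn⟩ := (this.eventually_lt_const ht0).exists
  refine ⟨-(n:ℝ), fun x hx => ?_⟩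
  by_contra h
  push_neg at h
  exact absurd (le_trans hx (cdf_mono h.le)) (not_le.2 hn)

lemma le_cdf_of_quantile_le {t x : ℝ} (ht0 : 0 < t) (ht1 : t < 1)
    (h : quantile F t ≤ x) : t ≤ (F (Iic x)).toReal := by
  have key : ∀ n : ℕ, t ≤ (F (Iic (x + 1/(n+1)))).toReal := by
    intro n
    have hlt : quantile F t < x + 1/(n+1) := lt_of_le_of_lt h (lt_add_of_pos_right x (by positivity))
    obtain ⟨y, hy, hyx⟩ := exists_lt_of_csInf_lt (quantile_set_nonempty ht1) hlt
    exact le_trans hy (cdf_mono hyx.le)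
  have h1 : Filter.Tendsto (fun n : ℕ => F (Iic (x + 1/(n+1)))) Filter.atTop
      (nhds (F (⋂ n : ℕ, Iic (x + 1/((n:ℝ)+1))))) := by
    refine tendsto_measure_iInter_atTop (fun n => measurableSet_Iic.nullMeasurableSet)
      (fun a b hab => Iic_subset_Iic.2 ?_) ⟨0, measure_ne_top _ _⟩
    have : (1:ℝ)/(b+1) ≤ 1/(a+1) := by
      apply one_div_le_one_div_of_le (by positivity)
      linarith [(Nat.cast_le (α := ℝ)).2 hab]
    linarith
  have hI : ⋂ n : ℕ, Iic (x + 1/((n:ℝ)+1)) = Iic x := by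
    ext y
    simp only [mem_iInter, mem_Iic]
    constructor
    · intro hy
      by_contra hxy
      push_neg at hxy
      obtain ⟨n, hn⟩ := exists_nat_gt (1/(y - x))
      have hn0 : (0:ℝ) < 1/(y-x) := one_div_pos.2 (by linarith)
      have : 1/((n:ℝ)+1) < y - x := by
        rw [div_lt_iff₀ (by positivity)]
        rw [div_lt_iff₀ (by linarith)] at hn
        nlinarith
      have := hy n; linarith
    · intro hy n
      have : (0:ℝ) < 1/((n:ℝ)+1) := by positivity
      linarith
  rw [hI] at h1
  have h2 := (ENNReal.tendsto_toReal (measure_ne_top F _)).comp h1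
  exact ge_of_tendsto h2 (Filter.Eventually.of_forall key)

lemma quantile_le_of_le_cdf {t x : ℝ} (ht0 : 0 < t)
    (h : t ≤ (F (Iic x)).toReal) : quantile F t ≤ x :=
  csInf_le (quantile_set_bddBelow ht0) h

lemma quantile_le_iff {t x : ℝ} (ht0 : 0 < t) (ht1 : t < 1) :
    quantile F t ≤ x ↔ t ≤ (F (Iic x)).toReal :=
  ⟨le_cdf_of_quantile_le ht0 ht1, quantile_le_of_le_cdf ht0⟩

lemma quantile_monoOn : MonotoneOn (quantile F) (Ioo (0:ℝ) 1) := by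
  intro s hs t ht hst
  have h1 : t ≤ (F (Iic (quantile F t))).toReal :=
    le_cdf_of_quantile_le ht.1 ht.2 le_rfl
  exact quantile_le_of_le_cdf hs.1 (le_trans hst h1)

lemma quantile_aemeasurable : AEMeasurable (quantile F) (volume.restrict (Ioo (0:ℝ) 1)) :=
  aemeasurable_restrict_of_monotoneOn measurableSet_Ioo quantile_monoOn

instance : IsProbabilityMeasure (volume.restrict (Ioo (0:ℝ) 1)) :=
  ⟨by simp [Real.volume_Ioo]⟩

lemma map_quantile : Measure.map (quantile F) (volume.restrict (Ioo (0:ℝ) 1)) = F := by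
  have hqm := quantile_aemeasurable (F := F)
  haveI : IsProbabilityMeasure (Measure.map (quantile F) (volume.restrict (Ioo (0:ℝ) 1))) :=
    Measure.isProbabilityMeasure_map hqm
  refine Measure.ext_of_Iic _ _ (fun x => ?_)
  rw [Measure.map_apply_of_aemeasurable hqm measurableSet_Iic, Measure.restrict_apply₀'
    measurableSet_Ioo.nullMeasurableSet]
  set c := (F (Iic x)).toReal with hc
  have hc0 : 0 ≤ c := ENNReal.toReal_nonneg
  have hc1 : c ≤ 1 := by
    have h1 : (F (Iic x)).toReal ≤ (F univ).toReal :=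
      ENNReal.toReal_mono (measure_ne_top _ _) (measure_mono (subset_univ _))
    simpa [measure_univ] using h1
  have hFc : F (Iic x) = ENNReal.ofReal c := (ENNReal.ofReal_toReal (measure_ne_top _ _)).symm
  have hset : quantile F ⁻¹' (Iic x) ∩ Ioo 0 1 = Iic c ∩ Ioo 0 1 := by
    ext u
    simp only [mem_inter_iff, mem_preimage, mem_Iic, mem_Ioo]
    constructor
    · rintro ⟨h1, h2⟩
      exact ⟨le_cdf_of_quantile_le h2.1 h2.2 h1, h2⟩
    · rintro ⟨h1, h2⟩
      exact ⟨quantile_le_of_le_cdf h2.1 h1, h2⟩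
  rw [hset, hFc]
  rcases lt_or_ge c 1 with hlt | hge
  · have : Iic c ∩ Ioo 0 1 = Ioc 0 c := by
      ext u; simp only [mem_inter_iff, mem_Iic, mem_Ioo, mem_Ioc]
      constructor
      · rintro ⟨h1, h2⟩; exact ⟨h2.1, h1⟩
      · rintro ⟨h1, h2⟩; exact ⟨h2, h1, lt_of_le_of_lt h2 hlt⟩
    rw [this, Real.volume_Ioc, sub_zero]
  · have hce : c = 1 := le_antisymm hc1 hge
    have : Iic c ∩ Ioo 0 1 = Ioo 0 1 := by
      rw [inter_eq_right]
      intro u hu; rw [mem_Iic, hce]; exact hu.2.le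
    rw [this, Real.volume_Ioo, hce]
    norm_num

end A



lemma exists_split (n : ℕ) (hn : 0 < n) (q : Fin n → ℝ → ℝ)
    (hmono : ∀ i, MonotoneOn (q i) (Ioo (0:ℝ) 1))
    (hlc : ∀ i, ∀ t ∈ Ioo (0:ℝ) 1, ∀ x : ℝ, (∀ u ∈ Ioo (0:ℝ) t, q i u ≤ x) → q i t ≤ x)
    (a : ℝ) :
    ∃ as : Fin n → ℝ, (∑ i, as i) = a ∧
      ∀ u ∈ Ioo (0:ℝ) 1, max ((∑ i, q i u) - a) 0 = ∑ i, max (q i u - as i) 0 := by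
  classical
  haveI hne : Nonempty (Fin n) := ⟨⟨0, hn⟩⟩
  have hn0 : (n:ℝ) ≠ 0 := Nat.cast_ne_zero.2 hn.ne'
  have hnpos : (0:ℝ) < n := Nat.cast_pos.2 hn
  set Q : ℝ → ℝ := fun u => ∑ i, q i u with hQ
  have hQmono : MonotoneOn Q (Ioo (0:ℝ) 1) := fun u hu v hv huv =>
    Finset.sum_le_sum (fun i _ => hmono i hu hv huv)
  have hhalf : (1/2 : ℝ) ∈ Ioo (0:ℝ) 1 := by norm_num
  -- general bound: for u in (0,1), q i u is controlled
  by_cases hhi : ∃ u₁ ∈ Ioo (0:ℝ) 1, a < Q u₁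
  · by_cases hlo : ∃ u₀ ∈ Ioo (0:ℝ) 1, Q u₀ ≤ a
    · -- main case
      obtain ⟨u₁, hu₁, hQu₁⟩ := hhi
      obtain ⟨u₀, hu₀, hQu₀⟩ := hlo
      set T : Set ℝ := {t | t ∈ Ioo (0:ℝ) 1 ∧ Q t ≤ a} with hT
      have hTne : T.Nonempty := ⟨u₀, by exact ⟨hu₀, hQu₀⟩⟩
      have hTub : ∀ t ∈ T, t ≤ u₁ := by
        intro t ht
        by_contra hc
        push_neg at hc
        exact absurd (le_trans (hQmono hu₁ ht.1 hc.le) ht.2) (not_le.2 hQu₁)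
      have hTbdd : BddAbove T := ⟨u₁, fun t ht => hTub t ht⟩
      set ts := sSup T with hts
      have hts0 : 0 < ts := lt_of_lt_of_le hu₀.1 (le_csSup hTbdd (by exact ⟨hu₀, hQu₀⟩ : u₀ ∈ T))
      have hts1 : ts < 1 := lt_of_le_of_lt (csSup_le hTne hTub) hu₁.2
      have htsm : ts ∈ Ioo (0:ℝ) 1 := ⟨hts0, hts1⟩
      -- b i = q i ts, and Q ts ≤ a
      have hQts : Q ts ≤ a := by
        -- left continuity argument
        have key : ∀ ε > 0, Q ts ≤ a + ε := by
          intro ε hε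
          -- for each i, find u_i ∈ (0, ts) with q i ts - ε/n < q i u_i
          have h1 : ∀ i : Fin n, ∃ u ∈ Ioo (0:ℝ) ts, q i ts - ε/n < q i u := by
            intro i
            by_contra hc
            push_neg at hc
            have : q i ts ≤ q i ts - ε/n :=
              hlc i ts htsm _ (fun u hu => hc u hu)
            have : (0:ℝ) < ε/n := by positivity
            linarith
          choose u hu hqu using h1
          set u' := Finset.univ.sup' Finset.univ_nonempty u with hu'
          have hu'lt : u' < ts := by
            obtain ⟨i, _, hieq⟩ := Finset.exists_mem_eq_sup' Finset.univ_nonempty u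
            rw [hu', hieq]; exact (hu i).2
          obtain ⟨t, htT, htgt⟩ := exists_lt_of_lt_csSup hTne (lt_of_lt_of_le hu'lt (le_refl ts))
          have htmem : t ∈ Ioo (0:ℝ) 1 := htT.1
          have : ∀ i, q i ts - ε/n ≤ q i t := by
            intro i
            have h2 : u i ≤ t := le_trans (Finset.le_sup' u (Finset.mem_univ i)) htgt.le
            have humem : u i ∈ Ioo (0:ℝ) 1 := ⟨(hu i).1, lt_trans (hu i).2 hts1⟩
            exact le_trans (hqu i).le (hmono i humem htmem h2)
          have hsum : Q ts - ε ≤ Q t := by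
            have := Finset.sum_le_sum (fun i (_ : i ∈ Finset.univ) => this i)
            have hcard : ∑ _i : Fin n, ε/n = ε := by
              rw [Finset.sum_const, Finset.card_univ, Fintype.card_fin, nsmul_eq_mul]
              field_simp
            rw [Finset.sum_sub_distrib, hcard] at this
            exact this
          linarith [htT.2]
        exact le_of_forall_pos_le_add key
      -- b' i
      have hIne : (Ioo ts 1).Nonempty := nonempty_Ioo.2 hts1
      have hbddB : ∀ i, BddBelow (q i '' Ioo ts 1) := by
        intro i
        refine ⟨q i ts, fun y hy => ?_⟩
        obtain ⟨v, hv, rfl⟩ := hy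
        exact hmono i htsm ⟨lt_trans hts0 hv.1, hv.2⟩ hv.1.le
      set b' : Fin n → ℝ := fun i => sInf (q i '' Ioo ts 1) with hb'
      have hbb' : ∀ i, q i ts ≤ b' i := fun i =>
        le_csInf (hIne.image _) (fun y hy => by
          obtain ⟨v, hv, rfl⟩ := hy
          exact hmono i htsm ⟨lt_trans hts0 hv.1, hv.2⟩ hv.1.le)
      have hb'le : ∀ i, ∀ v ∈ Ioo ts 1, b' i ≤ q i v := fun i v hv =>
        csInf_le (hbddB i) ⟨v, hv, rfl⟩
      have hB'a : a ≤ ∑ i, b' i := by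
        refine le_of_forall_pos_le_add ?_
        intro ε hε
        have h1 : ∀ i : Fin n, ∃ v ∈ Ioo ts 1, q i v < b' i + ε/n := by
          intro i
          have : sInf (q i '' Ioo ts 1) < b' i + ε/n := by
            have : (0:ℝ) < ε/n := by positivity
            linarith
          obtain ⟨y, hy, hlt⟩ := exists_lt_of_csInf_lt (hIne.image _) this
          obtain ⟨v, hv, rfl⟩ := hy
          exact ⟨v, hv, hlt⟩
        choose v hv hqv using h1
        set v' := Finset.univ.inf' Finset.univ_nonempty v with hv'
        have hv'mem : v' ∈ Ioo ts 1 := by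
          obtain ⟨i, _, hieq⟩ := Finset.exists_mem_eq_inf' Finset.univ_nonempty v
          rw [hv', hieq]; exact hv i
        have hv'notT : v' ∉ T := by
          intro hc
          exact absurd (le_csSup hTbdd hc) (not_le.2 hv'mem.1)
        have hv'm : v' ∈ Ioo (0:ℝ) 1 := ⟨lt_trans hts0 hv'mem.1, hv'mem.2⟩
        have hQv' : a < Q v' := by
          by_contra hc
          push_neg at hc
          exact hv'notT ⟨hv'm, hc⟩
        have h2 : Q v' ≤ ∑ i, (b' i + ε/n) := by
          refine Finset.sum_le_sum (fun i _ => ?_)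
          have h3 : v' ≤ v i := Finset.inf'_le v (Finset.mem_univ i)
          have hvm : v i ∈ Ioo (0:ℝ) 1 := ⟨lt_trans hts0 (hv i).1, (hv i).2⟩
          exact le_trans (hmono i hv'm hvm h3) (hqv i).le
        have hcard : ∑ _i : Fin n, (ε/n) = ε := by
          rw [Finset.sum_const, Finset.card_univ, Fintype.card_fin, nsmul_eq_mul]
          field_simp
        rw [Finset.sum_add_distrib, hcard] at h2
        linarith
      -- choose as
      set B := ∑ i, q i ts with hB
      set B' := ∑ i, b' i with hB'sum
      have hBB' : B ≤ B' := le_trans hQts hB'a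
      obtain ⟨as, hsum, hlb, hub⟩ :
          ∃ as : Fin n → ℝ, (∑ i, as i) = a ∧ (∀ i, q i ts ≤ as i) ∧ ∀ i, as i ≤ b' i := by
        rcases eq_or_lt_of_le hBB' with heq | hlt
        · refine ⟨fun i => q i ts, ?_, fun i => le_refl _, hbb'⟩
          have : a ≤ B := heq ▸ hB'a
          exact le_antisymm hQts this
        · set θ := (a - B)/(B' - B) with hθ
          have hθ0 : 0 ≤ θ := div_nonneg (by linarith [hQts]) (by linarith)
          have hθ1 : θ ≤ 1 := (div_le_one (by linarith)).2 (by linarith [hB'a])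
          refine ⟨fun i => q i ts + θ * (b' i - q i ts), ?_, fun i => ?_, fun i => ?_⟩
          · have hne' : B' - B ≠ 0 := ne_of_gt (by linarith)
            have hsd : ∑ i, (b' i - q i ts) = B' - B := Finset.sum_sub_distrib _ _
            rw [Finset.sum_add_distrib, ← Finset.mul_sum, hsd, hθ,
              div_mul_cancel₀ _ hne']
            ring
          · show q i ts ≤ q i ts + θ * (b' i - q i ts)
            nlinarith [mul_nonneg hθ0 (sub_nonneg.2 (hbb' i))]
          · show q i ts + θ * (b' i - q i ts) ≤ b' i
            nlinarith [mul_nonneg (sub_nonneg.2 hθ1) (sub_nonneg.2 (hbb' i))]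
      refine ⟨as, hsum, fun u hu => ?_⟩
      rcases le_or_gt u ts with hule | hugt
      · have h1 : ∀ i, q i u ≤ as i := fun i => le_trans (hmono i hu htsm hule) (hlb i)
        have h2 : Q u ≤ a := le_trans (hQmono hu htsm hule) hQts
        rw [max_eq_right (by simpa using sub_nonpos.2 h2)]
        symm
        rw [Finset.sum_eq_zero]
        intro i _
        exact max_eq_right (by simpa using sub_nonpos.2 (h1 i))
      · have h1 : ∀ i, as i ≤ q i u := fun i =>
          le_trans (hub i) (hb'le i u ⟨hugt, hu.2⟩)
        have h2 : a ≤ Q u := by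
          rw [← hsum]
          exact Finset.sum_le_sum (fun i _ => h1 i)
        rw [max_eq_left (by simpa using sub_nonneg.2 h2)]
        have : ∀ i ∈ Finset.univ, max (q i u - as i) 0 = q i u - as i := fun i _ =>
          max_eq_left (by simpa using sub_nonneg.2 (h1 i))
        rw [Finset.sum_congr rfl this, Finset.sum_sub_distrib, hsum]
    · -- a < Q u for all u
      push_neg at hlo
      have hbddC : ∀ i, BddBelow (q i '' Ioo (0:ℝ) 1) := by
        intro i
        refine ⟨min (q i (1/2)) (a - (Q (1/2) - q i (1/2))), fun y hy => ?_⟩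
        obtain ⟨u, hu, rfl⟩ := hy
        rcases le_total (1/2 : ℝ) u with h12 | h12
        · exact le_trans (min_le_left _ _) (hmono i hhalf hu h12)
        · refine le_trans (min_le_right _ _) ?_
          have hsplit : Q u = q i u + ∑ j ∈ Finset.univ.erase i, q j u := by
            rw [hQ]
            exact (Finset.add_sum_erase _ _ (Finset.mem_univ i)).symm
          have hsplit2 : Q (1/2) = q i (1/2) + ∑ j ∈ Finset.univ.erase i, q j (1/2) := by
            rw [hQ]
            exact (Finset.add_sum_erase _ _ (Finset.mem_univ i)).symm
          have hrest : ∑ j ∈ Finset.univ.erase i, q j u ≤ ∑ j ∈ Finset.univ.erase i, q j (1/2) :=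
            Finset.sum_le_sum (fun j _ => hmono j hu hhalf h12)
          have := hlo u hu
          linarith
      set c : Fin n → ℝ := fun i => sInf (q i '' Ioo (0:ℝ) 1) with hc
      have hcle : ∀ i, ∀ u ∈ Ioo (0:ℝ) 1, c i ≤ q i u := fun i u hu =>
        csInf_le (hbddC i) ⟨u, hu, rfl⟩
      have hCa : a ≤ ∑ i, c i := by
        refine le_of_forall_pos_le_add ?_
        intro ε hε
        have h1 : ∀ i : Fin n, ∃ u ∈ Ioo (0:ℝ) 1, q i u < c i + ε/n := by
          intro i
          have h2 : sInf (q i '' Ioo (0:ℝ) 1) < c i + ε/n := by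
            have : (0:ℝ) < ε/n := by positivity
            linarith
          obtain ⟨y, hy, hlt⟩ := exists_lt_of_csInf_lt ((nonempty_Ioo.2 one_pos).image _) h2
          obtain ⟨u, hu, rfl⟩ := hy
          exact ⟨u, hu, hlt⟩
        choose u hu hqu using h1
        set u' := Finset.univ.inf' Finset.univ_nonempty u with hu'
        have hu'mem : u' ∈ Ioo (0:ℝ) 1 := by
          obtain ⟨i, _, hieq⟩ := Finset.exists_mem_eq_inf' Finset.univ_nonempty u
          rw [hu', hieq]; exact hu i
        have h2 : Q u' ≤ ∑ i, (c i + ε/n) := by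
          refine Finset.sum_le_sum (fun i _ => ?_)
          exact le_trans (hmono i hu'mem (hu i) (Finset.inf'_le u (Finset.mem_univ i))) (hqu i).le
        have hcard : ∑ _i : Fin n, (ε/n) = ε := by
          rw [Finset.sum_const, Finset.card_univ, Fintype.card_fin, nsmul_eq_mul]
          field_simp
        rw [Finset.sum_add_distrib, hcard] at h2
        linarith [hlo u' hu'mem]
      refine ⟨fun i => c i - (∑ j, c j - a)/n, ?_, fun u hu => ?_⟩
      · rw [Finset.sum_sub_distrib, Finset.sum_const, Finset.card_univ, Fintype.card_fin,
          nsmul_eq_mul]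
        field_simp
        ring
      · have h1 : ∀ i, c i - (∑ j, c j - a)/n ≤ q i u := by
          intro i
          have : (0:ℝ) ≤ (∑ j, c j - a)/n := div_nonneg (by linarith) hnpos.le
          linarith [hcle i u hu]
        rw [max_eq_left (by simpa using sub_nonneg.2 (hlo u hu).le)]
        have : ∀ i ∈ Finset.univ, max (q i u - (c i - (∑ j, c j - a)/n)) 0
            = q i u - (c i - (∑ j, c j - a)/n) := fun i _ =>
          max_eq_left (by simpa using sub_nonneg.2 (h1 i))
        rw [Finset.sum_congr rfl this, Finset.sum_sub_distrib, Finset.sum_sub_distrib,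
          Finset.sum_const, Finset.card_univ, Fintype.card_fin, nsmul_eq_mul]
        field_simp
        ring
  · -- Q u ≤ a for all u
    push_neg at hhi
    have hbddD : ∀ i, BddAbove (q i '' Ioo (0:ℝ) 1) := by
      intro i
      refine ⟨max (q i (1/2)) (a - (Q (1/2) - q i (1/2))), fun y hy => ?_⟩
      obtain ⟨u, hu, rfl⟩ := hy
      rcases le_total u (1/2 : ℝ) with h12 | h12
      · exact le_trans (hmono i hu hhalf h12) (le_max_left _ _)
      · refine le_trans ?_ (le_max_right _ _)
        have hsplit : Q u = q i u + ∑ j ∈ Finset.univ.erase i, q j u := by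
          rw [hQ]
          exact (Finset.add_sum_erase _ _ (Finset.mem_univ i)).symm
        have hsplit2 : Q (1/2) = q i (1/2) + ∑ j ∈ Finset.univ.erase i, q j (1/2) := by
          rw [hQ]
          exact (Finset.add_sum_erase _ _ (Finset.mem_univ i)).symm
        have hrest : ∑ j ∈ Finset.univ.erase i, q j (1/2) ≤ ∑ j ∈ Finset.univ.erase i, q j u :=
          Finset.sum_le_sum (fun j _ => hmono j hhalf hu h12)
        have := hhi u hu
        linarith
    set d : Fin n → ℝ := fun i => sSup (q i '' Ioo (0:ℝ) 1) with hd
    have hdle : ∀ i, ∀ u ∈ Ioo (0:ℝ) 1, q i u ≤ d i := fun i u hu =>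
      le_csSup (hbddD i) ⟨u, hu, rfl⟩
    have hDa : ∑ i, d i ≤ a := by
      refine le_of_forall_pos_le_add ?_
      intro ε hε
      have h1 : ∀ i : Fin n, ∃ u ∈ Ioo (0:ℝ) 1, d i - ε/n < q i u := by
        intro i
        have h2 : d i - ε/n < sSup (q i '' Ioo (0:ℝ) 1) := by
          have : (0:ℝ) < ε/n := by positivity
          linarith
        obtain ⟨y, hy, hlt⟩ := exists_lt_of_lt_csSup ((nonempty_Ioo.2 one_pos).image _) h2
        obtain ⟨u, hu, rfl⟩ := hy
        exact ⟨u, hu, hlt⟩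
      choose u hu hqu using h1
      set u' := Finset.univ.sup' Finset.univ_nonempty u with hu'
      have hu'mem : u' ∈ Ioo (0:ℝ) 1 := by
        obtain ⟨i, _, hieq⟩ := Finset.exists_mem_eq_sup' Finset.univ_nonempty u
        rw [hu', hieq]; exact hu i
      have h2 : ∑ i, (d i - ε/n) ≤ Q u' := by
        refine Finset.sum_le_sum (fun i _ => ?_)
        exact le_trans (hqu i).le (hmono i (hu i) hu'mem (Finset.le_sup' u (Finset.mem_univ i)))
      have hcard : ∑ _i : Fin n, (ε/n) = ε := by
        rw [Finset.sum_const, Finset.card_univ, Fintype.card_fin, nsmul_eq_mul]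
        field_simp
      rw [Finset.sum_sub_distrib, hcard] at h2
      linarith [hhi u' hu'mem]
    refine ⟨fun i => d i + (a - ∑ j, d j)/n, ?_, fun u hu => ?_⟩
    · rw [Finset.sum_add_distrib, Finset.sum_const, Finset.card_univ, Fintype.card_fin,
        nsmul_eq_mul]
      field_simp
      ring
    · have h1 : ∀ i, q i u ≤ d i + (a - ∑ j, d j)/n := by
        intro i
        have : (0:ℝ) ≤ (a - ∑ j, d j)/n := div_nonneg (by linarith) hnpos.le
        linarith [hdle i u hu]
      rw [max_eq_right (by simpa using sub_nonpos.2 (hhi u hu))]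
      symm
      rw [Finset.sum_eq_zero]
      intro i _
      exact max_eq_right (by simpa using sub_nonpos.2 (h1 i))



section Ksub

variable {φ : ℝ → ℝ} (hφ : ConvexOn ℝ Set.univ φ)

noncomputable def ksub (φ : ℝ → ℝ) (y : ℝ) : ℝ :=
  sInf ((fun w => (φ w - φ y) / (w - y)) '' Ioi y)

lemma ksub_set_nonempty (y : ℝ) : ((fun w => (φ w - φ y) / (w - y)) '' Ioi y).Nonempty :=
  (nonempty_Ioi (a := y)).image _

include hφ in
lemma ksub_set_bddBelow (y : ℝ) :
    BddBelow ((fun w => (φ w - φ y) / (w - y)) '' Ioi y) := by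
  refine ⟨(φ (y-1) - φ y) / ((y-1) - y), fun z hz => ?_⟩
  obtain ⟨w, hw, rfl⟩ := hz
  exact hφ.secant_mono (mem_univ y) (mem_univ (y-1)) (mem_univ w)
    (ne_of_lt (by linarith)) (ne_of_gt hw) (by linarith [mem_Ioi.1 hw])

include hφ in
lemma ksub_le_slope {y w : ℝ} (h : y < w) : ksub φ y ≤ (φ w - φ y) / (w - y) :=
  csInf_le (ksub_set_bddBelow hφ y) ⟨w, h, rfl⟩

include hφ in
lemma slope_le_ksub {y c : ℝ} (h : ∀ w, y < w → c ≤ (φ w - φ y) / (w - y)) :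
    c ≤ ksub φ y := by
  refine le_csInf (ksub_set_nonempty y) ?_
  rintro z ⟨w, hw, rfl⟩
  exact h w hw

include hφ in
lemma ksub_subgrad : ∀ s y : ℝ, φ y + ksub φ y * (s - y) ≤ φ s := by
  intro s y
  rcases lt_trichotomy s y with hsy | rfl | hys
  · have hlb : (φ s - φ y) / (s - y) ≤ ksub φ y := by
      refine slope_le_ksub hφ (fun w hw => ?_)
      exact hφ.secant_mono (mem_univ y) (mem_univ s) (mem_univ w)
        (ne_of_lt hsy) (ne_of_gt hw) (by linarith)
    have h1 : ksub φ y * (s - y) ≤ ((φ s - φ y) / (s - y)) * (s - y) :=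
      mul_le_mul_of_nonpos_right hlb (by linarith)
    rw [div_mul_cancel₀ _ (sub_ne_zero_of_ne (ne_of_lt hsy))] at h1
    linarith
  · simp
  · have h1 : ksub φ y ≤ (φ s - φ y) / (s - y) := ksub_le_slope hφ hys
    have h2 : ksub φ y * (s - y) ≤ ((φ s - φ y) / (s - y)) * (s - y) :=
      mul_le_mul_of_nonneg_right h1 (by linarith)
    rw [div_mul_cancel₀ _ (sub_ne_zero_of_ne (ne_of_gt hys))] at h2
    linarith

include hφ in
lemma ksub_mono : Monotone (ksub φ) := by
  intro y₁ y₂ h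
  rcases eq_or_lt_of_le h with rfl | hlt
  · exact le_rfl
  refine le_trans ?_ (slope_le_ksub hφ (c := (φ y₂ - φ y₁) / (y₂ - y₁)) (fun w hw => ?_))
  · exact ksub_le_slope hφ hlt
  · have := hφ.secant_mono (mem_univ y₂) (mem_univ y₁) (mem_univ w)
      (ne_of_lt hlt) (ne_of_gt hw) (by linarith)
    have heq : (φ y₁ - φ y₂) / (y₁ - y₂) = (φ y₂ - φ y₁) / (y₂ - y₁) := by
      rw [← neg_sub (φ y₂) (φ y₁), ← neg_sub y₂ y₁, neg_div_neg_eq]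
    linarith [heq ▸ this]

include hφ in
lemma ksub_rightCont (y : ℝ) : ContinuousWithinAt (ksub φ) (Ici y) y := by
  rw [← continuousWithinAt_Ioi_iff_Ici]
  have hmono := ksub_mono hφ
  rw [ContinuousWithinAt, tendsto_order]
  constructor
  · intro b hb
    filter_upwards [self_mem_nhdsWithin] with z hz
    exact lt_of_lt_of_le hb (hmono (le_of_lt hz))
  · intro b hb
    obtain ⟨c, ⟨w, hw, rfl⟩, hc⟩ := exists_lt_of_csInf_lt (ksub_set_nonempty y) hb
    set g : ℝ → ℝ := fun z => (φ w - φ y - ksub φ y * (z - y)) / (w - z) with hg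
    have hgy : g y = (φ w - φ y) / (w - y) := by simp [hg]
    have hgtend : Tendsto g (nhdsWithin y (Ioi y)) (nhds (g y)) := by
      apply Filter.Tendsto.mono_left ?_ nhdsWithin_le_nhds
      have hcont : ContinuousAt g y := by
        apply ContinuousAt.div
        · fun_prop
        · fun_prop
        · exact sub_ne_zero.2 (ne_of_gt hw)
      exact hcont
    have hev : ∀ᶠ z in nhdsWithin y (Ioi y), g z < b := by
      apply hgtend.eventually_lt_const
      rw [hgy]; exact hc
    filter_upwards [hev, Ioo_mem_nhdsGT hw, self_mem_nhdsWithin] with z hz1 hz2 _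
    refine lt_of_le_of_lt ?_ hz1
    have h1 : ksub φ z ≤ (φ w - φ z) / (w - z) := ksub_le_slope hφ hz2.2
    refine le_trans h1 ?_
    have h2 : φ y + ksub φ y * (z - y) ≤ φ z := ksub_subgrad hφ z y
    have hwz : (0:ℝ) < w - z := by linarith [hz2.2]
    exact (div_le_div_iff_of_pos_right hwz).2 (by linarith)

end Ksub

lemma ftc_convex {φ k : ℝ → ℝ} (hk : Monotone k)
    (hsub : ∀ s y : ℝ, φ y + k y * (s - y) ≤ φ s)
    {a b : ℝ} (hab : a ≤ b) : φ b - φ a = ∫ t in a..b, k t := by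
  rcases eq_or_lt_of_le hab with rfl | hab
  · simp
  have hint : ∀ u v : ℝ, IntervalIntegrable k volume u v := fun u v => hk.intervalIntegrable
  set I := ∫ t in a..b, k t with hI
  have key : ∀ m : ℕ, 0 < m → |φ b - φ a - I| ≤ (k b - k a) * ((b - a) / m) := by
    intro m hm
    have hm0 : ((m:ℝ)) ≠ 0 := Nat.cast_ne_zero.2 hm.ne'
    set h := (b - a) / m with hh
    have hh0 : 0 < h := div_pos (by linarith) (Nat.cast_pos.2 hm)
    set t : ℕ → ℝ := fun j => a + j * h with ht
    have hts : ∀ j : ℕ, t (j+1) - t j = h := by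
      intro j; simp only [ht]; push_cast; ring
    have htmono : ∀ j : ℕ, t j ≤ t (j+1) := fun j => by
      have := hts j; linarith
    have hta : t 0 = a := by simp [ht]
    have htb : t m = b := by
      have h1 : (m:ℝ) * ((b - a)/m) = b - a := by field_simp
      simp only [ht, hh]
      rw [h1]; ring
    have hIsum : I = ∑ j ∈ Finset.range m, ∫ x in (t j)..(t (j+1)), k x := by
      rw [intervalIntegral.sum_integral_adjacent_intervals (fun j _ => hint _ _), hta, htb]
    have hφsum : φ b - φ a = ∑ j ∈ Finset.range m, (φ (t (j+1)) - φ (t j)) := by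
      rw [Finset.sum_range_sub (fun j => φ (t j)), hta, htb]
    have hbound : ∀ j ∈ Finset.range m,
        |(φ (t (j+1)) - φ (t j)) - ∫ x in (t j)..(t (j+1)), k x|
          ≤ (k (t (j+1)) - k (t j)) * h := by
      intro j _
      have hL : k (t j) * h ≤ φ (t (j+1)) - φ (t j) := by
        have := hsub (t (j+1)) (t j)
        rw [hts j] at this; linarith
      have hU : φ (t (j+1)) - φ (t j) ≤ k (t (j+1)) * h := by
        have := hsub (t j) (t (j+1))
        have h2 : t j - t (j+1) = -h := by linarith [hts j]
        rw [h2] at this; linarith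
      have hJL : k (t j) * h ≤ ∫ x in (t j)..(t (j+1)), k x := by
        have := intervalIntegral.integral_mono_on (htmono j)
          (intervalIntegrable_const (c := k (t j))) (hint _ _)
          (fun x hx => hk hx.1)
        rw [intervalIntegral.integral_const, hts j] at this
        simpa [smul_eq_mul, mul_comm] using this
      have hJU : (∫ x in (t j)..(t (j+1)), k x) ≤ k (t (j+1)) * h := by
        have := intervalIntegral.integral_mono_on (htmono j)
          (hint _ _) (intervalIntegrable_const (c := k (t (j+1))))
          (fun x hx => hk hx.2)
        rw [intervalIntegral.integral_const, hts j] at this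
        simpa [smul_eq_mul, mul_comm] using this
      rw [abs_le]
      constructor <;> nlinarith
    calc |φ b - φ a - I|
        = |∑ j ∈ Finset.range m, ((φ (t (j+1)) - φ (t j)) - ∫ x in (t j)..(t (j+1)), k x)| := by
          rw [Finset.sum_sub_distrib, ← hφsum, ← hIsum]
      _ ≤ ∑ j ∈ Finset.range m, |(φ (t (j+1)) - φ (t j)) - ∫ x in (t j)..(t (j+1)), k x| :=
          Finset.abs_sum_le_sum_abs _ _
      _ ≤ ∑ j ∈ Finset.range m, (k (t (j+1)) - k (t j)) * h :=
          Finset.sum_le_sum hbound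
      _ = (k b - k a) * h := by
          rw [← Finset.sum_mul, Finset.sum_range_sub (fun j => k (t j)), hta, htb]
  have habs : ∀ ε > 0, |φ b - φ a - I| ≤ ε := by
    intro ε hε
    obtain ⟨m, hm⟩ := exists_nat_gt (max 1 ((k b - k a) * (b - a) / ε))
    have hm1 : (1:ℝ) < m := lt_of_le_of_lt (le_max_left _ _) hm
    have hmpos : 0 < m := by exact_mod_cast lt_trans zero_lt_one hm1
    refine le_trans (key m hmpos) ?_
    have hka : 0 ≤ k b - k a := by linarith [hk hab.le]
    have h2 : (k b - k a) * (b - a) / ε < m := lt_of_le_of_lt (le_max_right _ _) hm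
    rw [div_lt_iff₀ hε] at h2
    rw [mul_div_assoc'] -- (k b - k a) * (b-a) / m
    rw [div_le_iff₀ (by exact_mod_cast lt_trans zero_lt_one hm1 : (0:ℝ) < m)]
    nlinarith
  have : |φ b - φ a - I| ≤ 0 := le_of_forall_pos_le_add (by simpa using habs)
  have := abs_nonneg (φ b - φ a - I)
  have h0 : φ b - φ a - I = 0 := abs_eq_zero.1 (le_antisymm ‹|φ b - φ a - I| ≤ 0› this)
  linarith

theorem convexOrder_of_stopLoss (μ ν : Measure ℝ) [IsProbabilityMeasure μ]
    [IsProbabilityMeasure ν]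
    (hμ : Integrable id μ) (hν : Integrable id ν)
    (hmean : ∫ x, x ∂μ = ∫ x, x ∂ν)
    (hsl : ∀ a : ℝ, ∫ x, max (x - a) 0 ∂μ ≤ ∫ x, max (x - a) 0 ∂ν) :
    ConvexOrder μ ν := by
  intro φ hφ hφμ hφν
  set k := ksub φ with hkdef
  have hk : Monotone k := ksub_mono hφ
  have hsub : ∀ s y : ℝ, φ y + k y * (s - y) ≤ φ s := ksub_subgrad hφ
  set K : StieltjesFunction ℝ := ⟨k, hk, ksub_rightCont hφ⟩ with hK
  set γ := K.measure with hγ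
  haveI : SigmaFinite γ := by infer_instance
  -- integrable max functions
  have hmaxint : ∀ (ρ : Measure ℝ) [IsProbabilityMeasure ρ], Integrable id ρ →
      ∀ s : ℝ, Integrable (fun x => max (x - s) 0) ρ := by
    intro ρ _ hρ s
    refine Integrable.mono' (hρ.abs.add (integrable_const |s|))
      (((measurable_id.sub measurable_const).max measurable_const).aestronglyMeasurable) ?_
    refine Filter.Eventually.of_forall (fun x => ?_)
    simp only [Pi.add_apply, Real.norm_eq_abs, id_eq]
    rw [abs_of_nonneg (le_max_right _ _)]
    rcases le_total (x - s) 0 with h | h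
    · rw [max_eq_right h]; positivity
    · rw [max_eq_left h]
      calc x - s ≤ |x - s| := le_abs_self _
        _ ≤ |x| + |s| := by
            rw [sub_eq_add_neg]
            exact (abs_add_le x (-s)).trans (by rw [abs_neg])
  have hmaxint' : ∀ (ρ : Measure ℝ) [IsProbabilityMeasure ρ], Integrable id ρ →
      ∀ s : ℝ, Integrable (fun x => max (s - x) 0) ρ := by
    intro ρ _ hρ s
    refine Integrable.mono' (hρ.abs.add (integrable_const |s|))
      (((measurable_const.sub measurable_id).max measurable_const).aestronglyMeasurable) ?_
    refine Filter.Eventually.of_forall (fun x => ?_)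
    simp only [Pi.add_apply, Real.norm_eq_abs, id_eq]
    rw [abs_of_nonneg (le_max_right _ _)]
    rcases le_total (s - x) 0 with h | h
    · rw [max_eq_right h]; positivity
    · rw [max_eq_left h]
      calc s - x ≤ |s - x| := le_abs_self _
        _ ≤ |s| + |x| := by
            rw [sub_eq_add_neg]
            exact (abs_add_le s (-x)).trans (by rw [abs_neg])
        _ = |x| + |s| := by ring
  -- reverse stop loss
  have hsl' : ∀ s : ℝ, ∫ x, max (s - x) 0 ∂μ ≤ ∫ x, max (s - x) 0 ∂ν := by
    intro s
    have hrw : ∀ (x : ℝ), max (s - x) 0 = max (x - s) 0 - x + s := by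
      intro x
      rcases le_total x s with h | h
      · rw [max_eq_left (by linarith), max_eq_right (by linarith)]; ring
      · rw [max_eq_right (by linarith), max_eq_left (by linarith)]; ring
    have hmint : ∀ (ρ : Measure ℝ) [IsProbabilityMeasure ρ], Integrable id ρ →
        ∫ x, max (s - x) 0 ∂ρ = ∫ x, max (x - s) 0 ∂ρ - ∫ x, x ∂ρ + s := by
      intro ρ hP hρ
      have hρ' : Integrable (fun x : ℝ => x) ρ := hρ
      have ha : Integrable (fun x => max (x - s) 0 - x) ρ := by
        exact (hmaxint ρ hρ s).sub hρ'
      simp only [hrw]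
      rw [integral_add ha (integrable_const s), integral_sub (hmaxint ρ hρ s) hρ',
        integral_const]
      simp [measure_univ]
    rw [hmint μ hμ, hmint ν hν, hmean]
    linarith [hsl s]
  -- T1, T2
  set T1 : ℝ → ENNReal := fun x => ∫⁻ s in Ioi (0:ℝ), ENNReal.ofReal (x - s) ∂γ with hT1def
  set T2 : ℝ → ENNReal := fun x => ∫⁻ s in Iic (0:ℝ), ENNReal.ofReal (s - x) ∂γ with hT2def
  have hm1 : Measurable (fun p : ℝ × ℝ => ENNReal.ofReal (p.1 - p.2)) :=
    (measurable_fst.sub measurable_snd).ennreal_ofReal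
  have hm2 : Measurable (fun p : ℝ × ℝ => ENNReal.ofReal (p.2 - p.1)) :=
    (measurable_snd.sub measurable_fst).ennreal_ofReal
  have hT1m : Measurable T1 := by
    have := Measurable.lintegral_prod_right' (ν := γ.restrict (Ioi 0)) hm1
    simpa [hT1def] using this
  have hT2m : Measurable T2 := by
    have := Measurable.lintegral_prod_right' (ν := γ.restrict (Iic 0)) hm2
    simpa [hT2def] using this
  -- pointwise identity for T1
  have hT1eq : ∀ x : ℝ, T1 x = ∫⁻ t in Iio x, ENNReal.ofReal (k t - k 0) ∂volume := by
    intro x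
    have hindm : Measurable (fun p : ℝ × ℝ => ({q : ℝ × ℝ | q.1 ≤ q.2}).indicator
        (fun _ => (1:ENNReal)) p) :=
      measurable_const.indicator (measurableSet_le measurable_fst measurable_snd)
    have h1 : ∀ s : ℝ, ENNReal.ofReal (x - s) =
        ∫⁻ t in Iio x, ({q : ℝ × ℝ | q.1 ≤ q.2}).indicator (fun _ => (1:ENNReal)) (s, t)
          ∂volume := by
      intro s
      have heq : (fun t => ({q : ℝ × ℝ | q.1 ≤ q.2}).indicator (fun _ => (1:ENNReal)) (s, t))
          = (Ici s).indicator (fun _ => (1:ENNReal)) := by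
        funext t
        by_cases h : s ≤ t <;> simp [Set.indicator_apply, h]
      rw [heq, lintegral_indicator measurableSet_Ici, setLIntegral_one,
        Measure.restrict_apply measurableSet_Ici, Ici_inter_Iio, Real.volume_Ico]
    simp only [hT1def]
    simp_rw [h1]
    rw [lintegral_lintegral_swap hindm.aemeasurable]
    refine lintegral_congr (fun t => ?_)
    have heq2 : (fun s => ({q : ℝ × ℝ | q.1 ≤ q.2}).indicator (fun _ => (1:ENNReal)) (s, t))
        = (Iic t).indicator (fun _ => (1:ENNReal)) := by
      funext s
      by_cases h : s ≤ t <;> simp [Set.indicator_apply, h]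
    rw [heq2, lintegral_indicator measurableSet_Iic, setLIntegral_one,
      Measure.restrict_apply measurableSet_Iic, Iic_inter_Ioi]
    exact K.measure_Ioc 0 t
  have hT2eq : ∀ x : ℝ, T2 x = ∫⁻ t in Ici x, ENNReal.ofReal (k 0 - k t) ∂volume := by
    intro x
    have hindm : Measurable (fun p : ℝ × ℝ => ({q : ℝ × ℝ | q.2 < q.1}).indicator
        (fun _ => (1:ENNReal)) p) :=
      measurable_const.indicator (measurableSet_lt measurable_snd measurable_fst)
    have h1 : ∀ s : ℝ, ENNReal.ofReal (s - x) =
        ∫⁻ t in Ici x, ({q : ℝ × ℝ | q.2 < q.1}).indicator (fun _ => (1:ENNReal)) (s, t)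
          ∂volume := by
      intro s
      have heq : (fun t => ({q : ℝ × ℝ | q.2 < q.1}).indicator (fun _ => (1:ENNReal)) (s, t))
          = (Iio s).indicator (fun _ => (1:ENNReal)) := by
        funext t
        by_cases h : t < s <;> simp [Set.indicator_apply, h]
      rw [heq, lintegral_indicator measurableSet_Iio, setLIntegral_one,
        Measure.restrict_apply measurableSet_Iio, Iio_inter_Ici, Real.volume_Ico]
    simp only [hT2def]
    simp_rw [h1]
    rw [lintegral_lintegral_swap hindm.aemeasurable]
    refine lintegral_congr (fun t => ?_)
    have heq2 : (fun s => ({q : ℝ × ℝ | q.2 < q.1}).indicator (fun _ => (1:ENNReal)) (s, t))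
        = (Ioi t).indicator (fun _ => (1:ENNReal)) := by
      funext s
      by_cases h : t < s <;> simp [Set.indicator_apply, h]
    rw [heq2, lintegral_indicator measurableSet_Ioi, setLIntegral_one,
      Measure.restrict_apply measurableSet_Ioi, Ioi_inter_Iic]
    exact K.measure_Ioc t 0
  -- the pointwise representation
  have hψ : ∀ x : ℝ, T1 x + T2 x = ENNReal.ofReal (φ x - φ 0 - k 0 * x) := by
    intro x
    rcases le_or_gt 0 x with hx | hx
    · have h2 : T2 x = 0 := by
        rw [hT2eq]
        rw [setLIntegral_congr_fun measurableSet_Ici (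
          (fun t ht => ENNReal.ofReal_eq_zero.2 (sub_nonpos.2 (hk (le_trans hx ht)))))]
        exact lintegral_zero
      have h1 : T1 x = ENNReal.ofReal (φ x - φ 0 - k 0 * x) := by
        rw [hT1eq]
        have hsplit : Iio x = Iio 0 ∪ Ico 0 x := by
          ext u
          simp only [mem_Iio, mem_union, mem_Ico]
          constructor
          · intro h
            rcases lt_or_ge u 0 with h' | h'
            · exact Or.inl h'
            · exact Or.inr ⟨h', h⟩
          · rintro (h | ⟨_, h⟩)
            · linarith
            · exact h
        have hdisj : Disjoint (Iio (0:ℝ)) (Ico 0 x) :=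
          disjoint_left.2 (fun u hu hu' => absurd hu'.1 (not_le.2 hu))
        rw [hsplit, lintegral_union measurableSet_Ico hdisj]
        have hz : ∫⁻ t in Iio (0:ℝ), ENNReal.ofReal (k t - k 0) ∂volume = 0 := by
          rw [setLIntegral_congr_fun measurableSet_Iio (
            (fun t ht => ENNReal.ofReal_eq_zero.2 (sub_nonpos.2 (hk (le_of_lt ht)))))]
          exact lintegral_zero
        rw [hz, zero_add]
        have hIntOn : IntegrableOn (fun t => k t - k 0) (Ico 0 x) volume := by
          have h3 := (intervalIntegrable_iff_integrableOn_Ico_of_le hx).1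
            (hk.intervalIntegrable (μ := volume) (a := 0) (b := x))
          have hc0 : IntegrableOn (fun _ => k 0) (Ico (0:ℝ) x) volume :=
            integrableOn_const (by
              rw [Real.volume_Ico]; exact ENNReal.ofReal_ne_top)
          exact h3.sub hc0
        have hnn : 0 ≤ᵐ[volume.restrict (Ico 0 x)] fun t => k t - k 0 :=
          (ae_restrict_iff' measurableSet_Ico).2 (Filter.Eventually.of_forall
            (fun t ht => sub_nonneg.2 (hk ht.1)))
        rw [← ofReal_integral_eq_lintegral_ofReal hIntOn hnn]
        congr 1
        rw [setIntegral_congr_set Ico_ae_eq_Ioc, ← intervalIntegral.integral_of_le hx,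
          intervalIntegral.integral_sub hk.intervalIntegrable intervalIntegrable_const,
          intervalIntegral.integral_const, ← ftc_convex hk hsub hx]
        simp only [smul_eq_mul, sub_zero]
        ring
      rw [h1, h2, add_zero]
    · have h1 : T1 x = 0 := by
        rw [hT1eq]
        rw [setLIntegral_congr_fun measurableSet_Iio (
          (fun t ht => ENNReal.ofReal_eq_zero.2 (sub_nonpos.2 (hk (le_of_lt (lt_trans ht hx))))))]
        exact lintegral_zero
      have h2 : T2 x = ENNReal.ofReal (φ x - φ 0 - k 0 * x) := by
        rw [hT2eq]
        have hsplit : Ici x = Ico x 0 ∪ Ici 0 := by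
          ext u
          simp only [mem_Ici, mem_union, mem_Ico]
          constructor
          · intro h
            rcases lt_or_ge u 0 with h' | h'
            · exact Or.inl ⟨h, h'⟩
            · exact Or.inr h'
          · rintro (⟨h, _⟩ | h)
            · exact h
            · linarith
        have hdisj : Disjoint (Ico x 0) (Ici (0:ℝ)) :=
          disjoint_left.2 (fun u hu hu' => absurd hu' (not_le.2 hu.2))
        rw [hsplit, lintegral_union measurableSet_Ici hdisj]
        have hz : ∫⁻ t in Ici (0:ℝ), ENNReal.ofReal (k 0 - k t) ∂volume = 0 := by
          rw [setLIntegral_congr_fun measurableSet_Ici (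
            (fun t ht => ENNReal.ofReal_eq_zero.2 (sub_nonpos.2 (hk ht))))]
          exact lintegral_zero
        rw [hz, add_zero]
        have hIntOn : IntegrableOn (fun t => k 0 - k t) (Ico x 0) volume := by
          have h3 := (intervalIntegrable_iff_integrableOn_Ico_of_le hx.le).1
            (hk.intervalIntegrable (μ := volume) (a := x) (b := 0))
          have hc0 : IntegrableOn (fun _ => k 0) (Ico x (0:ℝ)) volume :=
            integrableOn_const (by
              rw [Real.volume_Ico]; exact ENNReal.ofReal_ne_top)
          exact hc0.sub h3
        have hnn : 0 ≤ᵐ[volume.restrict (Ico x 0)] fun t => k 0 - k t :=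
          (ae_restrict_iff' measurableSet_Ico).2 (Filter.Eventually.of_forall
            (fun t ht => sub_nonneg.2 (hk ht.2.le)))
        rw [← ofReal_integral_eq_lintegral_ofReal hIntOn hnn]
        congr 1
        rw [setIntegral_congr_set Ico_ae_eq_Ioc, ← intervalIntegral.integral_of_le hx.le,
          intervalIntegral.integral_sub intervalIntegrable_const hk.intervalIntegrable,
          intervalIntegral.integral_const, ← ftc_convex hk hsub hx.le]
        simp only [smul_eq_mul, zero_sub]
        ring
      rw [h1, h2, zero_add]
  -- comparison of lintegrals
  have hofmax : ∀ c x : ℝ, ENNReal.ofReal (x - c) = ENNReal.ofReal (max (x - c) 0) := by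
    intro c x
    rcases le_total (x - c) 0 with h | h
    · rw [max_eq_right h, ENNReal.ofReal_eq_zero.2 h, ENNReal.ofReal_zero]
    · rw [max_eq_left h]
  have hofmax' : ∀ c x : ℝ, ENNReal.ofReal (c - x) = ENNReal.ofReal (max (c - x) 0) := by
    intro c x
    rcases le_total (c - x) 0 with h | h
    · rw [max_eq_right h, ENNReal.ofReal_eq_zero.2 h, ENNReal.ofReal_zero]
    · rw [max_eq_left h]
  have hlintofmax : ∀ (ρ : Measure ℝ) [IsProbabilityMeasure ρ], Integrable id ρ →
      ∀ s : ℝ, ∫⁻ x, ENNReal.ofReal (x - s) ∂ρ = ENNReal.ofReal (∫ x, max (x - s) 0 ∂ρ) := by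
    intro ρ hP hρ s
    simp_rw [hofmax s]
    rw [ofReal_integral_eq_lintegral_ofReal (hmaxint ρ hρ s)
      (Filter.Eventually.of_forall (fun x => le_max_right _ _))]
  have hlintofmax' : ∀ (ρ : Measure ℝ) [IsProbabilityMeasure ρ], Integrable id ρ →
      ∀ s : ℝ, ∫⁻ x, ENNReal.ofReal (s - x) ∂ρ = ENNReal.ofReal (∫ x, max (s - x) 0 ∂ρ) := by
    intro ρ hP hρ s
    simp_rw [hofmax' s]
    rw [ofReal_integral_eq_lintegral_ofReal (hmaxint' ρ hρ s)
      (Filter.Eventually.of_forall (fun x => le_max_right _ _))]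
  have hswap1 : ∀ (ρ : Measure ℝ), SFinite ρ →
      ∫⁻ x, T1 x ∂ρ = ∫⁻ s in Ioi (0:ℝ), (∫⁻ x, ENNReal.ofReal (x - s) ∂ρ) ∂γ := by
    intro ρ hsf
    simp only [hT1def]
    exact lintegral_lintegral_swap hm1.aemeasurable
  have hswap2 : ∀ (ρ : Measure ℝ), SFinite ρ →
      ∫⁻ x, T2 x ∂ρ = ∫⁻ s in Iic (0:ℝ), (∫⁻ x, ENNReal.ofReal (s - x) ∂ρ) ∂γ := by
    intro ρ hsf
    simp only [hT2def]
    exact lintegral_lintegral_swap hm2.aemeasurable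
  have hcomp1 : ∫⁻ x, T1 x ∂μ ≤ ∫⁻ x, T1 x ∂ν := by
    rw [hswap1 μ inferInstance, hswap1 ν inferInstance]
    refine lintegral_mono_ae (Filter.Eventually.of_forall (fun s => ?_))
    rw [hlintofmax μ hμ s, hlintofmax ν hν s]
    exact ENNReal.ofReal_le_ofReal (hsl s)
  have hcomp2 : ∫⁻ x, T2 x ∂μ ≤ ∫⁻ x, T2 x ∂ν := by
    rw [hswap2 μ inferInstance, hswap2 ν inferInstance]
    refine lintegral_mono_ae (Filter.Eventually.of_forall (fun s => ?_))
    rw [hlintofmax' μ hμ s, hlintofmax' ν hν s]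
    exact ENNReal.ofReal_le_ofReal (hsl' s)
  -- assemble
  set ψr : ℝ → ℝ := fun x => φ x - φ 0 - k 0 * x with hψrdef
  have hψnn : ∀ x, 0 ≤ ψr x := by
    intro x
    have := hsub x 0
    simp only [hψrdef, sub_zero] at this ⊢
    linarith
  have hψint : ∀ (ρ : Measure ℝ) [IsProbabilityMeasure ρ], Integrable φ ρ → Integrable id ρ →
      Integrable ψr ρ := by
    intro ρ hP h1 h2
    have h2' : Integrable (fun x : ℝ => x) ρ := h2
    exact (h1.sub (integrable_const (φ 0))).sub (h2'.const_mul (k 0))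
  have hintrepr : ∀ (ρ : Measure ℝ) [IsProbabilityMeasure ρ], Integrable φ ρ →
      Integrable id ρ → ∫ x, ψr x ∂ρ = ∫ x, φ x ∂ρ - φ 0 - k 0 * ∫ x, x ∂ρ := by
    intro ρ hP h1 h2
    have h2' : Integrable (fun x : ℝ => x) ρ := h2
    have ha : Integrable (fun x => φ x - φ 0) ρ := by exact h1.sub (integrable_const (φ 0))
    have hb : Integrable (fun x : ℝ => k 0 * x) ρ := by exact h2'.const_mul (k 0)
    simp only [hψrdef]
    rw [integral_sub ha hb, integral_sub h1 (integrable_const (φ 0)), integral_const,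
      integral_const_mul]
    simp [measure_univ]
  have key : ∫ x, ψr x ∂μ ≤ ∫ x, ψr x ∂ν := by
    have hμψ := hψint μ hφμ hμ
    have hνψ := hψint ν hφν hν
    have e1 : ENNReal.ofReal (∫ x, ψr x ∂μ) = ∫⁻ x, ENNReal.ofReal (ψr x) ∂μ :=
      ofReal_integral_eq_lintegral_ofReal hμψ (Filter.Eventually.of_forall hψnn)
    have e2 : ENNReal.ofReal (∫ x, ψr x ∂ν) = ∫⁻ x, ENNReal.ofReal (ψr x) ∂ν :=
      ofReal_integral_eq_lintegral_ofReal hνψ (Filter.Eventually.of_forall hψnn)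
    have h3 : ∫⁻ x, ENNReal.ofReal (ψr x) ∂μ ≤ ∫⁻ x, ENNReal.ofReal (ψr x) ∂ν := by
      have hre : ∀ x, ENNReal.ofReal (ψr x) = T1 x + T2 x := fun x => (hψ x).symm
      simp_rw [hre]
      rw [lintegral_add_left hT1m, lintegral_add_left hT1m]
      exact add_le_add hcomp1 hcomp2
    rw [← e1, ← e2] at h3
    exact (ENNReal.ofReal_le_ofReal_iff (integral_nonneg hψnn)).1 h3
  rw [hintrepr μ hφμ hμ, hintrepr ν hφν hν, hmean] at key
  linarith

theorem stmt0 (n : ℕ) (Fs : Fin n → Measure ℝ)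
    (hprob : ∀ i, IsProbabilityMeasure (Fs i))
    (hint : ∀ i, Integrable id (Fs i))
    (Ω : Type) [MeasureSpace Ω] [IsProbabilityMeasure (ℙ : Measure Ω)]
    (X : Fin n → Ω → ℝ) (hX : ∀ i, Measurable (X i))
    (hdist : ∀ i, Measure.map (X i) ℙ = Fs i) :
    ConvexOrder (Measure.map (fun ω => ∑ i, X i ω) ℙ)
      (Measure.map (fun t => ∑ i, quantile (Fs i) t)
        (volume.restrict (Set.Ioo (0:ℝ) 1))) := by
  classical
  haveI : IsProbabilityMeasure (volume.restrict (Ioo (0:ℝ) 1)) := ⟨by simp [Real.volume_Ioo]⟩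
  rcases Nat.eq_zero_or_pos n with hn0 | hn
  · subst hn0
    have h1 : (fun ω => ∑ i : Fin 0, X i ω) = fun _ => (0:ℝ) := by funext ω; simp
    have h2 : (fun t => ∑ i : Fin 0, quantile (Fs i) t) = fun _ => (0:ℝ) := by funext t; simp
    have heq : Measure.map (fun ω => ∑ i : Fin 0, X i ω) ℙ
        = Measure.map (fun t => ∑ i : Fin 0, quantile (Fs i) t)
          (volume.restrict (Set.Ioo (0:ℝ) 1)) := by
      rw [h1, h2, Measure.map_const, Measure.map_const, measure_univ, measure_univ]
    rw [heq]
    intro φ _ _ _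
    exact le_refl _
  set q : Fin n → ℝ → ℝ := fun i => quantile (Fs i) with hqdef
  have hmonoq : ∀ i, MonotoneOn (q i) (Ioo (0:ℝ) 1) := fun i => by
    haveI := hprob i; exact quantile_monoOn
  have hqmeas : ∀ i, AEMeasurable (q i) (volume.restrict (Ioo (0:ℝ) 1)) := fun i =>
    aemeasurable_restrict_of_monotoneOn measurableSet_Ioo (hmonoq i)
  have hmapq : ∀ i, Measure.map (q i) (volume.restrict (Ioo (0:ℝ) 1)) = Fs i := fun i => by
    haveI := hprob i; exact map_quantile
  have hlc : ∀ i, ∀ t ∈ Ioo (0:ℝ) 1, ∀ x : ℝ, (∀ u ∈ Ioo (0:ℝ) t, q i u ≤ x) → q i t ≤ x := by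
    intro i t ht x hu
    haveI := hprob i
    refine quantile_le_of_le_cdf ht.1 ?_
    by_contra hc
    push_neg at hc
    set u := (max ((Fs i (Iic x)).toReal) (t/2) + t)/2 with hudef
    have hmt : max ((Fs i (Iic x)).toReal) (t/2) < t := max_lt hc (by linarith [ht.1])
    have hu1 : u < t := by rw [hudef]; linarith
    have hu0 : 0 < u := by
      rw [hudef]
      have := le_max_right ((Fs i (Iic x)).toReal) (t/2)
      linarith [ht.1]
    have hql := hu u ⟨hu0, hu1⟩
    have h2 := le_cdf_of_quantile_le hu0 (lt_trans hu1 ht.2) hql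
    have h3 : (Fs i (Iic x)).toReal < u := by
      rw [hudef]
      have := le_max_left ((Fs i (Iic x)).toReal) (t/2)
      linarith
    linarith
  set S : Ω → ℝ := fun ω => ∑ i, X i ω with hSdef
  have hSmeas : Measurable S := Finset.measurable_sum _ (fun i _ => hX i)
  set Qf : ℝ → ℝ := fun u => ∑ i, q i u with hQfdef
  have hQfmeas : AEMeasurable Qf (volume.restrict (Ioo (0:ℝ) 1)) :=
    Finset.aemeasurable_fun_sum _ (fun i _ => hqmeas i)
  haveI hPμ : IsProbabilityMeasure (Measure.map S ℙ) :=
    Measure.isProbabilityMeasure_map hSmeas.aemeasurable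
  haveI hPν : IsProbabilityMeasure (Measure.map Qf (volume.restrict (Ioo (0:ℝ) 1))) :=
    Measure.isProbabilityMeasure_map hQfmeas
  have hXint : ∀ i, Integrable (X i) ℙ := by
    intro i
    have h1 := hint i
    rw [← hdist i] at h1
    have h2 := (integrable_map_measure measurable_id.aestronglyMeasurable
      (hX i).aemeasurable).1 h1
    simpa [Function.comp] using h2
  have hqint : ∀ i, Integrable (q i) (volume.restrict (Ioo (0:ℝ) 1)) := by
    intro i
    have h1 := hint i
    rw [← hmapq i] at h1
    have h2 := (integrable_map_measure measurable_id.aestronglyMeasurable (hqmeas i)).1 h1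
    simpa [Function.comp] using h2
  have hSint : Integrable S ℙ := integrable_finset_sum _ (fun i _ => hXint i)
  have hQfint : Integrable Qf (volume.restrict (Ioo (0:ℝ) 1)) :=
    integrable_finset_sum _ (fun i _ => hqint i)
  have hidμ : Integrable id (Measure.map S ℙ) := by
    rw [integrable_map_measure measurable_id.aestronglyMeasurable hSmeas.aemeasurable]
    simpa [Function.comp] using hSint
  have hidν : Integrable id (Measure.map Qf (volume.restrict (Ioo (0:ℝ) 1))) := by
    rw [integrable_map_measure measurable_id.aestronglyMeasurable hQfmeas]
    simpa [Function.comp] using hQfint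
  have hXmean : ∀ i, ∫ ω, X i ω ∂(ℙ : Measure Ω) = ∫ u in Ioo (0:ℝ) 1, q i u := by
    intro i
    have h1 : ∫ x, x ∂(Fs i) = ∫ ω, X i ω ∂(ℙ : Measure Ω) := by
      rw [← hdist i]
      exact integral_map (hX i).aemeasurable measurable_id'.aestronglyMeasurable
    have h2 : ∫ x, x ∂(Fs i) = ∫ u in Ioo (0:ℝ) 1, q i u := by
      rw [← hmapq i]
      exact integral_map (hqmeas i) measurable_id'.aestronglyMeasurable
    rw [← h1, h2]
  have hmean : ∫ x, x ∂(Measure.map S ℙ)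
      = ∫ x, x ∂(Measure.map Qf (volume.restrict (Ioo (0:ℝ) 1))) := by
    have e1 : ∫ x, x ∂(Measure.map S ℙ) = ∫ ω, S ω ∂(ℙ : Measure Ω) :=
      integral_map hSmeas.aemeasurable measurable_id'.aestronglyMeasurable
    have e2 : ∫ x, x ∂(Measure.map Qf (volume.restrict (Ioo (0:ℝ) 1)))
        = ∫ u in Ioo (0:ℝ) 1, Qf u :=
      integral_map hQfmeas measurable_id'.aestronglyMeasurable
    rw [e1, e2]
    simp only [hSdef, hQfdef]
    rw [integral_finset_sum _ (fun i _ => hXint i),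
      integral_finset_sum _ (fun i _ => hqint i)]
    exact Finset.sum_congr rfl (fun i _ => hXmean i)
  have hsl : ∀ a : ℝ, ∫ x, max (x - a) 0 ∂(Measure.map S ℙ)
      ≤ ∫ x, max (x - a) 0 ∂(Measure.map Qf (volume.restrict (Ioo (0:ℝ) 1))) := by
    intro a
    obtain ⟨as, hsum, hsplit⟩ := exists_split n hn q hmonoq hlc a
    have hmaxmeas : ∀ c : ℝ, StronglyMeasurable (fun x : ℝ => max (x - c) 0) :=
      fun c => ((continuous_id.sub continuous_const).max continuous_const).stronglyMeasurable
    have hL : ∫ x, max (x - a) 0 ∂(Measure.map S ℙ) = ∫ ω, max (S ω - a) 0 ∂(ℙ : Measure Ω) := by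
      rw [integral_map hSmeas.aemeasurable (hmaxmeas a).aestronglyMeasurable]
    have hR : ∫ x, max (x - a) 0 ∂(Measure.map Qf (volume.restrict (Ioo (0:ℝ) 1)))
        = ∫ u in Ioo (0:ℝ) 1, max (Qf u - a) 0 := by
      rw [integral_map hQfmeas (hmaxmeas a).aestronglyMeasurable]
    rw [hL, hR]
    have hintS : Integrable (fun ω => max (S ω - a) 0) ℙ := by
      refine Integrable.mono' (hSint.abs.add (integrable_const |a|))
        (((hSmeas.sub measurable_const).max measurable_const).aestronglyMeasurable) ?_
      refine Filter.Eventually.of_forall (fun ω => ?_)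
      simp only [Pi.add_apply, Real.norm_eq_abs]
      rw [abs_of_nonneg (le_max_right _ _)]
      rcases le_total (S ω - a) 0 with h | h
      · rw [max_eq_right h]; positivity
      · rw [max_eq_left h]
        calc S ω - a ≤ |S ω - a| := le_abs_self _
          _ ≤ |S ω| + |a| := by
              rw [sub_eq_add_neg]
              exact (abs_add_le _ _).trans (by rw [abs_neg])
    have hintXi : ∀ i, Integrable (fun ω => max (X i ω - as i) 0) ℙ := by
      intro i
      refine Integrable.mono' ((hXint i).abs.add (integrable_const |as i|))
        ((((hX i).sub measurable_const).max measurable_const).aestronglyMeasurable) ?_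
      refine Filter.Eventually.of_forall (fun ω => ?_)
      simp only [Pi.add_apply, Real.norm_eq_abs]
      rw [abs_of_nonneg (le_max_right _ _)]
      rcases le_total (X i ω - as i) 0 with h | h
      · rw [max_eq_right h]; positivity
      · rw [max_eq_left h]
        calc X i ω - as i ≤ |X i ω - as i| := le_abs_self _
          _ ≤ |X i ω| + |as i| := by
              rw [sub_eq_add_neg]
              exact (abs_add_le _ _).trans (by rw [abs_neg])
    have hintqi : ∀ i, Integrable (fun u => max (q i u - as i) 0)
        (volume.restrict (Ioo (0:ℝ) 1)) := by
      intro i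
      refine Integrable.mono' ((hqint i).abs.add (integrable_const |as i|))
        ((((hqmeas i).sub aemeasurable_const).max aemeasurable_const).aestronglyMeasurable) ?_
      refine Filter.Eventually.of_forall (fun u => ?_)
      simp only [Pi.add_apply, Real.norm_eq_abs]
      rw [abs_of_nonneg (le_max_right _ _)]
      rcases le_total (q i u - as i) 0 with h | h
      · rw [max_eq_right h]; positivity
      · rw [max_eq_left h]
        calc q i u - as i ≤ |q i u - as i| := le_abs_self _
          _ ≤ |q i u| + |as i| := by
              rw [sub_eq_add_neg]
              exact (abs_add_le _ _).trans (by rw [abs_neg])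
    calc ∫ ω, max (S ω - a) 0 ∂(ℙ : Measure Ω)
        ≤ ∫ ω, ∑ i, max (X i ω - as i) 0 ∂(ℙ : Measure Ω) := by
          refine integral_mono hintS (integrable_finset_sum _ (fun i _ => hintXi i)) ?_
          intro ω
          show max (S ω - a) 0 ≤ ∑ i, max (X i ω - as i) 0
          rcases le_total (S ω) a with h | h
          · rw [max_eq_right (by linarith)]
            exact Finset.sum_nonneg (fun i _ => le_max_right _ _)
          · rw [max_eq_left (by linarith)]
            have he : S ω - a = ∑ i, (X i ω - as i) := by
              simp only [Finset.sum_sub_distrib, hsum, hSdef]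
            rw [he]
            exact Finset.sum_le_sum (fun i _ => le_max_left _ _)
      _ = ∑ i, ∫ ω, max (X i ω - as i) 0 ∂(ℙ : Measure Ω) :=
          integral_finset_sum _ (fun i _ => hintXi i)
      _ = ∑ i, ∫ u in Ioo (0:ℝ) 1, max (q i u - as i) 0 := by
          refine Finset.sum_congr rfl (fun i _ => ?_)
          have e1 : ∫ x, max (x - as i) 0 ∂(Fs i)
              = ∫ ω, max (X i ω - as i) 0 ∂(ℙ : Measure Ω) := by
            rw [← hdist i, integral_map (hX i).aemeasurable
              (hmaxmeas (as i)).aestronglyMeasurable]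
          have e2 : ∫ x, max (x - as i) 0 ∂(Fs i)
              = ∫ u in Ioo (0:ℝ) 1, max (q i u - as i) 0 := by
            rw [← hmapq i, integral_map (hqmeas i) (hmaxmeas (as i)).aestronglyMeasurable]
          rw [← e1, e2]
      _ = ∫ u in Ioo (0:ℝ) 1, ∑ i, max (q i u - as i) 0 :=
          (integral_finset_sum _ (fun i _ => hintqi i)).symm
      _ = ∫ u in Ioo (0:ℝ) 1, max (Qf u - a) 0 := by
          refine setIntegral_congr_fun measurableSet_Ioo (fun u hu => ?_)
          exact (hsplit u hu).symm
  exact convexOrder_of_stopLoss _ _ hidμ hidν hmean hsl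
end

section
/- For distributions F, G with finite mean and equal means, G ≺cx F if and only if for every k ∈ ℝ, ∫(x−k)₊ dG(x) ≤ ∫(x−k)₊ dF(x). -/
open MeasureTheory ProbabilityTheory Set

lemma aux_affine_integrable (μ : Measure ℝ) [IsProbabilityMeasure μ]
    (h : Integrable id μ) (c d : ℝ) : Integrable (fun x => c * x + d) μ := by
  simpa using (h.const_mul c).add (integrable_const d)

lemma aux_affine_integral (μ : Measure ℝ) [IsProbabilityMeasure μ]
    (h : Integrable id μ) (c d : ℝ) :
    ∫ x, (c * x + d) ∂μ = c * (∫ x, x ∂μ) + d := by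
  have h1 : Integrable (fun x : ℝ => c * x) μ := by simpa using h.const_mul c
  rw [integral_add h1 (integrable_const d), integral_const_mul, integral_const]
  simp

lemma aux_pos_integrable (μ : Measure ℝ) [IsProbabilityMeasure μ]
    (h : Integrable id μ) (k : ℝ) : Integrable (fun x => max (x - k) 0) μ := by
  have h1 : Integrable (fun x : ℝ => x - k) μ := by exact h.sub (integrable_const k)
  have h2 := h1.sup (integrable_const (0:ℝ))
  have : (fun x : ℝ => max (x - k) 0) = ((fun x : ℝ => x - k) ⊔ fun _ => 0) := by
    funext x; simp [Pi.sup_apply, max_def]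
  rwa [this]

lemma aux_lin (φx φr sx sr C δ ε x r : ℝ)
    (h1 : φx + sx * (r - x) ≤ φr)
    (p1 : -C * (r - x) ≤ (sx - sr) * (r - x))
    (p2 : C * (r - x) ≤ C * δ)
    (p3 : C * δ ≤ ε / 2)
    (hε : 0 < ε) : φx - ε < φr + sr * (x - r) := by
  linarith

private theorem stmt1_aux (F G : Measure ℝ)
    (hFp : IsProbabilityMeasure F) (hGp : IsProbabilityMeasure G)
    (hFi : Integrable id F) (hGi : Integrable id G)
    (hmean : ∫ x, x ∂F = ∫ x, x ∂G)
    (hSL : ∀ k : ℝ, ∫ x, max (x - k) 0 ∂G ≤ ∫ x, max (x - k) 0 ∂F)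
    (φ : ℝ → ℝ) (hφ : ConvexOn ℝ Set.univ φ) (hφG : Integrable φ G)
    (hφF : Integrable φ F) : ∫ x, φ x ∂G ≤ ∫ x, φ x ∂F := by
  classical
  haveI := hFp; haveI := hGp
  -- subgradient
  set T : ℝ → Set ℝ := fun q => (fun y => (φ y - φ q) / (y - q)) '' Ioi q with hT
  set s : ℝ → ℝ := fun q => sInf (T q) with hs
  have hTne : ∀ q, (T q).Nonempty := fun q => ⟨_, ⟨q+1, by simp, rfl⟩⟩
  have hslope : ∀ a b c : ℝ, a < b → b < c →
      (φ b - φ a)/(b - a) ≤ (φ c - φ b)/(c - b) := fun a b c hab hbc =>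
    hφ.slope_mono_adjacent (mem_univ a) (mem_univ c) hab hbc
  have hTbdd : ∀ q, BddBelow (T q) := by
    intro q
    refine ⟨(φ q - φ (q-1))/(q - (q-1)), ?_⟩
    rintro m ⟨y, hy, rfl⟩
    exact hslope (q-1) q y (by linarith) hy
  have hs_le_slope : ∀ q y, q < y → s q ≤ (φ y - φ q)/(y - q) := fun q y hqy =>
    csInf_le (hTbdd q) ⟨y, hqy, rfl⟩
  have hslope_le_s : ∀ q y, y < q → (φ q - φ y)/(q - y) ≤ s q := by
    intro q y hyq
    refine le_csInf (hTne q) ?_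
    rintro m ⟨z, hz, rfl⟩
    exact hslope y q z hyq hz
  -- supporting lines
  set L : ℝ → ℝ → ℝ := fun q x => φ q + s q * (x - q) with hLdef
  have hsupp : ∀ q x, L q x ≤ φ x := by
    intro q x
    rcases lt_trichotomy x q with h | h | h
    · have h1 := hslope_le_s q x h
      have hne : (0:ℝ) < q - x := by linarith
      rw [div_le_iff₀ hne] at h1
      simp only [hLdef]; nlinarith
    · simp [hLdef, h]
    · have h1 := hs_le_slope q x h
      have hne : (0:ℝ) < x - q := by linarith
      rw [le_div_iff₀ hne] at h1
      simp only [hLdef]; linarith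
  have hs_mono : Monotone s := by
    intro a b hab
    rcases eq_or_lt_of_le hab with rfl | h
    · exact le_refl _
    have h1 := hsupp a b
    have h2 := hsupp b a
    simp only [hLdef] at h1 h2
    nlinarith
  -- affine facts
  have hLaff : ∀ q, (fun x => L q x) = fun x => s q * x + (φ q - s q * q) := by
    intro q; funext x; simp only [hLdef]; ring
  have hLiF : ∀ q, Integrable (L q) F := by
    intro q; rw [show L q = fun x => s q * x + (φ q - s q * q) from hLaff q]
    exact aux_affine_integrable F hFi _ _
  have hLiG : ∀ q, Integrable (L q) G := by
    intro q; rw [show L q = fun x => s q * x + (φ q - s q * q) from hLaff q]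
    exact aux_affine_integrable G hGi _ _
  have hLeq : ∀ q, ∫ x, L q x ∂F = ∫ x, L q x ∂G := by
    intro q
    rw [show (fun x => L q x) = fun x => s q * x + (φ q - s q * q) from hLaff q,
      aux_affine_integral F hFi, aux_affine_integral G hGi, hmean]
  -- key induction over finite sets of tangent points
  have key : ∀ S : Finset ℝ, ∀ hS : S.Nonempty,
      Integrable (fun x => S.sup' hS fun q => L q x) F ∧
      Integrable (fun x => S.sup' hS fun q => L q x) G ∧
      (∫ x, S.sup' hS (fun q => L q x) ∂G) ≤ (∫ x, S.sup' hS (fun q => L q x) ∂F) ∧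
      ∀ x, S.max' hS ≤ x → S.sup' hS (fun q => L q x) = L (S.max' hS) x := by
    intro S
    induction S using Finset.induction_on_max with
    | empty => intro hS; exact absurd hS (by simp)
    | insert a S ha ih =>
      intro hS'
      rcases S.eq_empty_or_nonempty with rfl | hSne
      · have e1 : ∀ x : ℝ, (insert a (∅ : Finset ℝ)).sup' hS' (fun q => L q x) = L a x := by
          intro x
          simp [Finset.sup'_singleton]
        have e2 : (insert a (∅ : Finset ℝ)).max' hS' = a := by simp
        refine ⟨?_, ?_, ?_, ?_⟩
        · rw [show (fun x => (insert a (∅:Finset ℝ)).sup' hS' fun q => L q x) = L a from funext e1]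
          exact hLiF a
        · rw [show (fun x => (insert a (∅:Finset ℝ)).sup' hS' fun q => L q x) = L a from funext e1]
          exact hLiG a
        · simp only [e1]
          exact (hLeq a).symm.le
        · intro x _; rw [e1, e2]
      · obtain ⟨hF1, hG1, hI1, hmax1⟩ := ih hSne
        have hba : S.max' hSne < a := ha _ (S.max'_mem hSne)
        set b := S.max' hSne with hbdef
        have hmax' : (insert a S).max' hS' = a := by
          rw [Finset.max'_insert a S hSne]
          exact max_eq_left hba.le
        have hc0 : 0 ≤ s a - s b := by
          have := hs_mono hba.le; linarith
        by_cases hcz : s a - s b = 0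
        · -- equal slopes: lines coincide
          have hse : s a = s b := by linarith
          have h1 := hsupp b a
          have h2 := hsupp a b
          simp only [hLdef] at h1 h2
          have hphi : φ a = φ b + s b * (a - b) := by
            rw [hse] at h2; nlinarith
          have hlineq : ∀ x, L a x = L b x := by
            intro x; simp only [hLdef]; rw [hse, hphi]; ring
          have hpt : ∀ x, (insert a S).sup' hS' (fun q => L q x)
              = S.sup' hSne (fun q => L q x) := by
            intro x
            rw [Finset.sup'_insert]
            have h3 : L a x ≤ S.sup' hSne (fun q => L q x) :=
              (hlineq x) ▸ Finset.le_sup' (fun q => L q x) (S.max'_mem hSne)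
            exact sup_eq_right.mpr h3
          refine ⟨?_, ?_, ?_, ?_⟩
          · rw [funext hpt]; exact hF1
          · rw [funext hpt]; exact hG1
          · simp only [hpt]; exact hI1
          · intro x hx
            rw [hmax'] at hx ⊢
            rw [hpt x, hmax1 x (le_trans hba.le hx), ← hlineq x]
        · -- strictly larger slope
          have hcpos : 0 < s a - s b := lt_of_le_of_ne hc0 (Ne.symm hcz)
          set c : ℝ := s a - s b with hcdef
          set k : ℝ := (φ b - s b * b - (φ a - s a * a)) / c with hkdef
          have hcne : c ≠ 0 := ne_of_gt hcpos
          have hdiff : ∀ x, L a x - L b x = c * (x - k) := by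
            intro x
            simp only [hLdef, hkdef, hcdef]
            have hcne2 : s a - s b ≠ 0 := hcne
            field_simp
            ring
          have hkb : b ≤ k := by
            have h2 := hsupp a b
            have h3 : L a b - L b b ≤ 0 := by
              simp only [hLdef] at h2 ⊢; nlinarith
            rw [hdiff b] at h3
            nlinarith
          have hka : k ≤ a := by
            have h2 := hsupp b a
            have h3 : 0 ≤ L a a - L b a := by
              simp only [hLdef] at h2 ⊢; nlinarith
            rw [hdiff a] at h3
            nlinarith
          have hpt : ∀ x, (insert a S).sup' hS' (fun q => L q x)
              = S.sup' hSne (fun q => L q x) + c * max (x - k) 0 := by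
            intro x
            rw [Finset.sup'_insert (H := hSne)]
            rcases le_or_gt x k with hx | hx
            · have h1 : L a x ≤ L b x := by nlinarith [hdiff x]
              have h2 : L a x ≤ S.sup' hSne (fun q => L q x) :=
                h1.trans (Finset.le_sup' (fun q => L q x) (S.max'_mem hSne))
              rw [sup_eq_right.mpr h2, max_eq_right (by linarith : x - k ≤ 0)]
              ring
            · have hxb : b ≤ x := hkb.trans hx.le
              have h1 : S.sup' hSne (fun q => L q x) = L b x := hmax1 x hxb
              have h2 : L b x ≤ L a x := by nlinarith [hdiff x]
              rw [h1, sup_eq_left.mpr h2, max_eq_left (by linarith : (0:ℝ) ≤ x - k)]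
              nlinarith [hdiff x]
          have hposF := aux_pos_integrable F hFi k
          have hposG := aux_pos_integrable G hGi k
          refine ⟨?_, ?_, ?_, ?_⟩
          · rw [funext hpt]; exact hF1.add (hposF.const_mul c)
          · rw [funext hpt]; exact hG1.add (hposG.const_mul c)
          · simp only [hpt]
            rw [integral_add hG1 (hposG.const_mul c), integral_add hF1 (hposF.const_mul c),
              integral_const_mul, integral_const_mul]
            exact add_le_add hI1 (mul_le_mul_of_nonneg_left (hSL k) hc0)
          · intro x hx
            rw [hmax'] at hx ⊢
            have hxk : k ≤ x := hka.trans hx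
            rw [hpt x, hmax1 x (hkb.trans hxk), max_eq_left (by linarith : (0:ℝ) ≤ x - k)]
            nlinarith [hdiff x]
  -- approximating sequence
  obtain ⟨e, he⟩ := exists_surjective_nat ℚ
  set Sn : ℕ → Finset ℝ := fun N => (Finset.range (N+1)).image (fun i => ((e i : ℚ) : ℝ))
    with hSndef
  have hSnne : ∀ N, (Sn N).Nonempty :=
    fun N => (Finset.nonempty_range_iff.mpr (Nat.succ_ne_zero N)).image _
  set ψ : ℕ → ℝ → ℝ := fun N x => (Sn N).sup' (hSnne N) (fun q => L q x) with hψdef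
  have hkey := fun N => key (Sn N) (hSnne N)
  have hmem : ∀ i N, i ≤ N → ((e i : ℚ) : ℝ) ∈ Sn N := by
    intro i N hiN
    exact Finset.mem_image.mpr ⟨i, Finset.mem_range.mpr (by omega), rfl⟩
  have hlb : ∀ N x, L ((e 0 : ℚ) : ℝ) x ≤ ψ N x :=
    fun N x => Finset.le_sup' (fun q => L q x) (hmem 0 N (Nat.zero_le N))
  have hub : ∀ N x, ψ N x ≤ φ x :=
    fun N x => Finset.sup'_le _ _ (fun q _ => hsupp q x)
  have hconv : ∀ x, Filter.Tendsto (fun N => ψ N x) Filter.atTop (nhds (φ x)) := by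
    intro x
    have hmono : Monotone fun N => ψ N x := by
      intro m n hmn
      have hsub : Sn m ⊆ Sn n :=
        Finset.image_subset_image (Finset.range_subset_range.mpr (by omega))
      exact Finset.sup'_mono _ hsub (hSnne m)
    have happrox : ∀ ε : ℝ, 0 < ε → ∃ N, φ x - ε < ψ N x := by
      intro ε hε
      set C : ℝ := |s x| + |s (x+1)| + 1 with hCdef
      have hCpos : (0:ℝ) < C := by positivity
      set δ : ℝ := min 1 (ε / (2*C)) with hδdef
      have hδpos : 0 < δ := lt_min one_pos (by positivity)
      have hδ1 : δ ≤ 1 := min_le_left _ _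
      have hδ2 : δ ≤ ε / (2*C) := min_le_right _ _
      obtain ⟨r, hr1, hr2⟩ := exists_rat_btwn (lt_add_of_pos_right x hδpos)
      obtain ⟨i, rfl⟩ := he r
      refine ⟨i, ?_⟩
      have hψi : L ((e i : ℚ) : ℝ) x ≤ ψ i x :=
        Finset.le_sup' (fun q => L q x) (hmem i i le_rfl)
      have h1 : φ x + s x * (((e i : ℚ):ℝ) - x) ≤ φ ((e i : ℚ):ℝ) := hsupp x _
      have hrle : ((e i : ℚ):ℝ) ≤ x + 1 := by linarith
      have hs1 : s ((e i : ℚ):ℝ) ≤ s (x+1) := hs_mono hrle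
      have hs2 : s x ≤ s ((e i : ℚ):ℝ) := hs_mono hr1.le
      have hax : -|s x| ≤ s x := neg_abs_le _
      have hax2 : s (x+1) ≤ |s (x+1)| := le_abs_self _
      have hu : -C ≤ s x - s ((e i : ℚ):ℝ) := by
        simp only [hCdef]; linarith
      have hd1 : 0 < ((e i : ℚ):ℝ) - x := by linarith
      have hd2 : ((e i : ℚ):ℝ) - x < δ := by linarith
      have p1 := mul_le_mul_of_nonneg_right hu hd1.le
      have p2 := mul_le_mul_of_nonneg_left hd2.le hCpos.le
      have p3 : C * δ ≤ ε/2 := by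
        have hde : C * (ε / (2*C)) = ε/2 := by field_simp
        nlinarith
      have hLrx : φ x - ε < L ((e i : ℚ):ℝ) x := by
        simp only [hLdef]
        exact aux_lin _ _ _ _ _ _ _ _ _ h1 p1 p2 p3 hε
      exact hLrx.trans_le hψi
    have hbdd : BddAbove (Set.range fun N => ψ N x) :=
      ⟨φ x, by rintro _ ⟨N, rfl⟩; exact hub N x⟩
    have ht := tendsto_atTop_ciSup hmono hbdd
    have heq : (⨆ N, ψ N x) = φ x := by
      refine le_antisymm (ciSup_le fun N => hub N x) ?_
      by_contra hlt
      push_neg at hlt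
      obtain ⟨N, hN⟩ := happrox (φ x - ⨆ N, ψ N x) (by linarith)
      have := le_ciSup hbdd N
      linarith
    rwa [heq] at ht
  -- dominated convergence
  have hbF : Integrable (fun x => |φ x| + |L ((e 0:ℚ):ℝ) x|) F := hφF.abs.add (hLiF _).abs
  have hbG : Integrable (fun x => |φ x| + |L ((e 0:ℚ):ℝ) x|) G := hφG.abs.add (hLiG _).abs
  have hbnd : ∀ N x, ‖ψ N x‖ ≤ |φ x| + |L ((e 0:ℚ):ℝ) x| := by
    intro N x
    have h1 := hlb N x
    have h2 := hub N x
    have h3 : -|L ((e 0:ℚ):ℝ) x| ≤ L ((e 0:ℚ):ℝ) x := neg_abs_le _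
    have h4 : φ x ≤ |φ x| := le_abs_self _
    have h5 : (0:ℝ) ≤ |φ x| := abs_nonneg _
    have h6 : (0:ℝ) ≤ |L ((e 0:ℚ):ℝ) x| := abs_nonneg _
    rw [Real.norm_eq_abs, abs_le]
    constructor <;> linarith
  have htF : Filter.Tendsto (fun N => ∫ x, ψ N x ∂F) Filter.atTop (nhds (∫ x, φ x ∂F)) :=
    tendsto_integral_of_dominated_convergence _
      (fun N => (hkey N).1.aestronglyMeasurable) hbF
      (fun N => Filter.Eventually.of_forall (hbnd N))
      (Filter.Eventually.of_forall hconv)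
  have htG : Filter.Tendsto (fun N => ∫ x, ψ N x ∂G) Filter.atTop (nhds (∫ x, φ x ∂G)) :=
    tendsto_integral_of_dominated_convergence _
      (fun N => (hkey N).2.1.aestronglyMeasurable) hbG
      (fun N => Filter.Eventually.of_forall (hbnd N))
      (Filter.Eventually.of_forall hconv)
  exact le_of_tendsto_of_tendsto' htG htF (fun N => (hkey N).2.2.1)

theorem stmt1 (F G : Measure ℝ)
    (hFp : IsProbabilityMeasure F) (hGp : IsProbabilityMeasure G)
    (hFi : Integrable id F) (hGi : Integrable id G)
    (hmean : ∫ x, x ∂F = ∫ x, x ∂G) :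
    ConvexOrder G F ↔
      ∀ k : ℝ, ∫ x, max (x - k) 0 ∂G ≤ ∫ x, max (x - k) 0 ∂F := by
  constructor
  · intro hCO k
    have h1 : ConvexOn ℝ (Set.univ : Set ℝ) (fun x : ℝ => x - k) :=
      (convexOn_id convex_univ).sub (concaveOn_const k convex_univ)
    have hconv : ConvexOn ℝ (Set.univ : Set ℝ) (fun x : ℝ => max (x - k) 0) := by
      have h2 := h1.sup (convexOn_const (0:ℝ) convex_univ)
      have h3 : (fun x : ℝ => max (x - k) 0) = ((fun x : ℝ => x - k) ⊔ fun _ => 0) := by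
        funext x; simp [Pi.sup_apply, max_def]
      rwa [h3]
    exact hCO _ hconv (@aux_pos_integrable G hGp hGi k) (@aux_pos_integrable F hFp hFi k)
  · intro hSL φ hφ hφG hφF
    exact stmt1_aux F G hFp hGp hFi hGi hmean hSL φ hφ hφG hφF
end

section
/- Let F be a bi-atomic distribution with mean 1 supported on {a, a+b} with b > 0. Then there exist X, Y ~ U[0,1] with X + Y ~ F if and only if 1/b is a positive integer. -/
open MeasureTheory ProbabilityTheory Set

open scoped ENNReal

lemma unif01 : unif 0 1 = volume.restrict (Set.Icc 0 1) := by
  simp [unif]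

lemma map_reflect (d l r : ℝ) :
    Measure.map (fun x => d - x) (volume.restrict (Set.Ico l r))
      = volume.restrict (Set.Ico (d - r) (d - l)) := by
  have hm : Measurable fun x : ℝ => d - x := measurable_const.sub measurable_id
  have h1 : (volume : Measure ℝ).restrict (Set.Ioc (d - r) (d - l))
      = Measure.map (fun x => d - x) (volume.restrict (Set.Ico l r)) := by
    conv_lhs => rw [← (Measure.measurePreserving_sub_left (volume : Measure ℝ) d).map_eq]
    rw [Measure.restrict_map hm measurableSet_Ioc]
    congr 2
    ext x
    simp only [Set.mem_preimage, Set.mem_Ioc, Set.mem_Ico]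
    constructor
    · rintro ⟨h1, h2⟩; constructor <;> linarith
    · rintro ⟨h1, h2⟩; constructor <;> linarith
  rw [← h1]
  exact Measure.restrict_congr_set ((Ioo_ae_eq_Ioc).symm.trans Ioo_ae_eq_Ico)

lemma restrict_biUnion_finset {ι : Type*} (s : Finset ι) (t : ι → Set ℝ)
    (hm : ∀ i, MeasurableSet (t i)) (hd : (s : Set ι).PairwiseDisjoint t)
    (μ : Measure ℝ) :
    μ.restrict (⋃ i ∈ s, t i) = ∑ i ∈ s, μ.restrict (t i) := by
  ext A hA
  rw [Measure.restrict_apply hA, Measure.finset_sum_apply]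
  have : A ∩ ⋃ i ∈ s, t i = ⋃ i ∈ s, A ∩ t i := by
    ext x; simp [Set.mem_iUnion]
  rw [this, measure_biUnion_finset
    (fun i hi j hj hij => (hd hi hj hij).mono Set.inter_subset_right Set.inter_subset_right)
    (fun i _ => hA.inter (hm i))]
  simp [Measure.restrict_apply hA]

lemma map_finset_sum_meas {ι : Type*} (s : Finset ι) (μ : ι → Measure ℝ) {g : ℝ → ℝ}
    (hg : Measurable g) :
    Measure.map g (∑ i ∈ s, μ i) = ∑ i ∈ s, Measure.map g (μ i) := by
  ext A hA
  rw [Measure.map_apply hg hA, Measure.finset_sum_apply, Measure.finset_sum_apply]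
  simp [Measure.map_apply hg hA]

lemma suff (a b p : ℝ) (hb : 0 < b) (hp : 0 < p) (hp1 : p < 1)
    (k : ℕ) (hk : 0 < k) (hkb : (k : ℝ) * b = 1)
    (ha : a = 1 - b + p * b) :
    IsSumDist (unif 0 1) (unif 0 1)
      (ENNReal.ofReal p • Measure.dirac a + ENNReal.ofReal (1 - p) • Measure.dirac (a + b)) := by
  classical
  set c : ℝ := p * b with hc
  have hc0 : 0 < c := by positivity
  have hcb : c < b := by nlinarith
  set μ0 : Measure ℝ := volume.restrict (Set.Icc 0 1) with hμ0
  set S : Set ℝ := ⋃ j ∈ Finset.range k, Set.Ico ((j : ℝ) * b) ((j : ℝ) * b + c) with hSdef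
  have hS : MeasurableSet S :=
    MeasurableSet.biUnion (Finset.range k).countable_toSet (fun _ _ => measurableSet_Ico)
  set g : ℝ → ℝ := fun x => if x ∈ S then a - x else a + b - x with hgdef
  have hg : Measurable g :=
    Measurable.ite hS (measurable_const.sub measurable_id) (measurable_const.sub measurable_id)
  -- basic cast helper
  have hmono : ∀ i j : ℕ, i ≤ j → (i : ℝ) * b ≤ (j : ℝ) * b := by
    intro i j hij
    have : (i : ℝ) ≤ (j : ℝ) := Nat.cast_le.2 hij
    nlinarith
  -- tiling of [0,1)
  have htile : Set.Ico (0 : ℝ) 1 = ⋃ j ∈ Finset.range k, Set.Ico ((j : ℝ) * b) (((j : ℝ) + 1) * b) := by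
    ext x
    simp only [Set.mem_Ico, Set.mem_iUnion, Finset.mem_range]
    constructor
    · rintro ⟨hx0, hx1⟩
      refine ⟨⌊x / b⌋₊, ?_, ?_, ?_⟩
      · have h1 : x / b < (k : ℝ) := by
          rw [div_lt_iff₀ hb]; nlinarith
        exact (Nat.floor_lt (by positivity : (0:ℝ) ≤ x / b)).2 h1
      · have := Nat.floor_le (by positivity : (0:ℝ) ≤ x / b)
        calc (⌊x / b⌋₊ : ℝ) * b ≤ (x / b) * b := by nlinarith
          _ = x := by field_simp
      · have := Nat.lt_floor_add_one (x / b)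
        have hxx : x / b * b < ((⌊x / b⌋₊ : ℝ) + 1) * b := by nlinarith
        calc x = x / b * b := by field_simp
          _ < _ := hxx
    · rintro ⟨j, hjk, hj1, hj2⟩
      constructor
      · have : (0:ℝ) ≤ (j : ℝ) * b := by positivity
        linarith
      · have : ((j : ℝ) + 1) * b ≤ (k : ℝ) * b := by
          have : ((j : ℝ) + 1) ≤ (k : ℝ) := by exact_mod_cast hjk
          nlinarith
        linarith [hkb]
  -- pairwise disjointness of the blocks
  have hdisjblk : (↑(Finset.range k) : Set ℕ).PairwiseDisjoint
      (fun j : ℕ => Set.Ico ((j : ℝ) * b) (((j : ℝ) + 1) * b)) := by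
    intro i _ j _ hij
    rcases Nat.lt_or_ge i j with h | h
    · refine Set.Ico_disjoint_Ico.2 ?_
      have : ((i : ℝ) + 1) * b ≤ (j : ℝ) * b := by
        have : ((i : ℝ) + 1) ≤ (j : ℝ) := by exact_mod_cast h
        nlinarith
      calc min (((i:ℝ)+1)*b) (((j:ℝ)+1)*b) ≤ ((i:ℝ)+1)*b := min_le_left _ _
        _ ≤ (j:ℝ)*b := this
        _ ≤ max ((i:ℝ)*b) ((j:ℝ)*b) := le_max_right _ _
    · have h' : j < i := lt_of_le_of_ne h (Ne.symm hij)
      refine Set.Ico_disjoint_Ico.2 ?_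
      have : ((j : ℝ) + 1) * b ≤ (i : ℝ) * b := by
        have : ((j : ℝ) + 1) ≤ (i : ℝ) := by exact_mod_cast h'
        nlinarith
      calc min (((i:ℝ)+1)*b) (((j:ℝ)+1)*b) ≤ ((j:ℝ)+1)*b := min_le_right _ _
        _ ≤ (i:ℝ)*b := this
        _ ≤ max ((i:ℝ)*b) ((j:ℝ)*b) := le_max_left _ _
  have hISub : ∀ j, j < k → Set.Ico ((j:ℝ)*b) ((j:ℝ)*b + c) ⊆ S := by
    intro j hj x hx
    rw [hSdef]
    exact Set.mem_biUnion (Finset.mem_range.2 hj) hx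
  have hJnotS : ∀ j : ℕ, ∀ x ∈ Set.Ico ((j:ℝ)*b + c) (((j:ℝ)+1)*b), x ∉ S := by
    intro j x hx hxS
    rw [hSdef] at hxS
    simp only [Set.mem_iUnion, Finset.mem_range, Set.mem_Ico] at hxS
    obtain ⟨i, _, hi1, hi2⟩ := hxS
    obtain ⟨hx1, hx2⟩ := hx
    rcases le_or_gt i j with h | h
    · have := hmono i j h; linarith
    · have h2 : ((j:ℝ)+1) * b ≤ (i:ℝ) * b := by
        have : ((j:ℝ)+1) ≤ (i:ℝ) := by exact_mod_cast h
        nlinarith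
      linarith
  have hmapI : ∀ j, j < k → Measure.map g (volume.restrict (Set.Ico ((j:ℝ)*b) ((j:ℝ)*b + c)))
      = volume.restrict (Set.Ico ((↑(k-1-j) : ℝ)*b) ((↑(k-1-j) : ℝ)*b + c)) := by
    intro j hj
    have hcast : ((k-1-j : ℕ) : ℝ) = (k:ℝ) - 1 - (j:ℝ) := by
      rw [Nat.sub_sub, Nat.cast_sub (by omega : 1 + j ≤ k)]
      push_cast; ring
    have heq : ∀ x ∈ Set.Ico ((j:ℝ)*b) ((j:ℝ)*b + c), g x = a - x := by
      intro x hx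
      rw [hgdef]
      simp only
      rw [if_pos (hISub j hj hx)]
    rw [Measure.map_congr ((ae_restrict_iff' measurableSet_Ico).2
      (Filter.Eventually.of_forall heq)), map_reflect, hcast]
    have e1 : a - ((j:ℝ)*b + c) = ((k:ℝ)-1-(j:ℝ))*b := by linear_combination ha - hkb
    have e2 : a - (j:ℝ)*b = ((k:ℝ)-1-(j:ℝ))*b + c := by linear_combination ha - hkb
    rw [e1, e2]
  have hmapJ : ∀ j, j < k → Measure.map g (volume.restrict (Set.Ico ((j:ℝ)*b + c) (((j:ℝ)+1)*b)))
      = volume.restrict (Set.Ico ((↑(k-1-j) : ℝ)*b + c) (((↑(k-1-j) : ℝ) + 1)*b)) := by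
    intro j hj
    have hcast : ((k-1-j : ℕ) : ℝ) = (k:ℝ) - 1 - (j:ℝ) := by
      rw [Nat.sub_sub, Nat.cast_sub (by omega : 1 + j ≤ k)]
      push_cast; ring
    have heq : ∀ x ∈ Set.Ico ((j:ℝ)*b + c) (((j:ℝ)+1)*b), g x = a + b - x := by
      intro x hx
      rw [hgdef]
      simp only
      rw [if_neg (hJnotS j x hx)]
    rw [Measure.map_congr ((ae_restrict_iff' measurableSet_Ico).2
      (Filter.Eventually.of_forall heq)), map_reflect, hcast]
    have e1 : a + b - ((j:ℝ)+1)*b = ((k:ℝ)-1-(j:ℝ))*b + c := by linear_combination ha - hkb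
    have e2 : a + b - ((j:ℝ)*b + c) = (((k:ℝ)-1-(j:ℝ)) + 1)*b := by linear_combination ha - hkb
    rw [e1, e2]
  have hsplit : volume.restrict (Set.Ico (0:ℝ) 1)
      = (∑ j ∈ Finset.range k, volume.restrict (Set.Ico ((j:ℝ)*b) ((j:ℝ)*b + c)))
        + ∑ j ∈ Finset.range k, volume.restrict (Set.Ico ((j:ℝ)*b + c) (((j:ℝ)+1)*b)) := by
    rw [htile, restrict_biUnion_finset _ _ (fun _ => measurableSet_Ico) hdisjblk,
        ← Finset.sum_add_distrib]
    refine Finset.sum_congr rfl ?_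
    intro j _
    rw [← Measure.restrict_union Set.Ico_disjoint_Ico_same measurableSet_Ico,
        Set.Ico_union_Ico_eq_Ico (by nlinarith) (by nlinarith)]
  have hkey0 : Measure.map g (volume.restrict (Set.Ico (0:ℝ) 1))
      = volume.restrict (Set.Ico (0:ℝ) 1) := by
    rw [hsplit, Measure.map_add _ _ hg, map_finset_sum_meas _ _ hg, map_finset_sum_meas _ _ hg]
    congr 1
    · rw [Finset.sum_congr rfl (fun j hj => hmapI j (Finset.mem_range.1 hj))]
      exact Finset.sum_range_reflect
        (fun i => volume.restrict (Set.Ico ((i:ℝ)*b) ((i:ℝ)*b + c))) k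
    · rw [Finset.sum_congr rfl (fun j hj => hmapJ j (Finset.mem_range.1 hj))]
      exact Finset.sum_range_reflect
        (fun i => volume.restrict (Set.Ico ((i:ℝ)*b + c) (((i:ℝ)+1)*b))) k
  have hIccIco : μ0 = volume.restrict (Set.Ico (0:ℝ) 1) :=
    (Measure.restrict_congr_set Ico_ae_eq_Icc).symm
  have hkey : Measure.map g μ0 = μ0 := by rw [hIccIco]; exact hkey0
  have hSub01 : S ⊆ Set.Icc (0:ℝ) 1 := by
    intro x hx
    rw [hSdef] at hx
    simp only [Set.mem_iUnion, Finset.mem_range, Set.mem_Ico] at hx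
    obtain ⟨j, hj, h1, h2⟩ := hx
    have hj1 : ((j:ℝ)+1)*b ≤ (k:ℝ)*b := by
      have : ((j:ℝ)+1) ≤ (k:ℝ) := by exact_mod_cast hj
      nlinarith
    constructor
    · have : (0:ℝ) ≤ (j:ℝ)*b := by positivity
      linarith
    · nlinarith
  have hdisjS : (↑(Finset.range k) : Set ℕ).PairwiseDisjoint
      (fun j : ℕ => Set.Ico ((j:ℝ)*b) ((j:ℝ)*b + c)) := by
    intro i hi j hj hij
    refine (hdisjblk hi hj hij).mono ?_ ?_ <;>
      exact Set.Ico_subset_Ico_right (by nlinarith)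
  have hPSvol : volume S = ENNReal.ofReal p := by
    rw [hSdef, measure_biUnion_finset hdisjS (fun _ _ => measurableSet_Ico)]
    have hv : ∀ j ∈ Finset.range k, volume (Set.Ico ((j:ℝ)*b) ((j:ℝ)*b + c))
        = ENNReal.ofReal c := by
      intro j _
      rw [Real.volume_Ico]
      congr 1; ring
    rw [Finset.sum_congr rfl hv, Finset.sum_const, Finset.card_range, nsmul_eq_mul,
        ← ENNReal.ofReal_natCast, ← ENNReal.ofReal_mul (by positivity)]
    congr 1
    calc (k:ℝ) * c = p * ((k:ℝ)*b) := by rw [hc]; ring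
      _ = p := by rw [hkb]; ring
  have hPS : μ0 S = ENNReal.ofReal p := by
    rw [hμ0, Measure.restrict_apply hS, Set.inter_eq_self_of_subset_left hSub01, hPSvol]
  haveI hprob : IsProbabilityMeasure μ0 :=
    ⟨by rw [hμ0, Measure.restrict_apply_univ, Real.volume_Icc]; norm_num⟩
  have hPSc : μ0 Sᶜ = ENNReal.ofReal (1 - p) := by
    rw [measure_compl hS (measure_ne_top μ0 S), measure_univ, hPS,
        ENNReal.ofReal_sub 1 hp.le, ENNReal.ofReal_one]
  have hsumfun : (fun x => x + g x) = fun x => if x ∈ S then a else a + b := by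
    funext x
    rw [hgdef]
    by_cases h : x ∈ S <;> simp [h] <;> ring
  have hmeas_ite : Measurable (fun x : ℝ => if x ∈ S then a else a + b) :=
    Measurable.ite hS measurable_const measurable_const
  have hmapsum : Measure.map (fun x => x + g x) μ0
      = ENNReal.ofReal p • Measure.dirac a + ENNReal.ofReal (1-p) • Measure.dirac (a+b) := by
    rw [hsumfun]
    conv_lhs => rw [← Measure.restrict_add_restrict_compl (μ := μ0) hS]
    rw [Measure.map_add _ _ hmeas_ite]
    congr 1
    · have h1 : Measure.map (fun x : ℝ => if x ∈ S then a else a + b) (μ0.restrict S)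
          = Measure.map (fun _ => a) (μ0.restrict S) :=
        Measure.map_congr ((ae_restrict_iff' hS).2
          (Filter.Eventually.of_forall (fun x hx => if_pos hx)))
      rw [h1, Measure.map_const, Measure.restrict_apply_univ, hPS]
    · have h1 : Measure.map (fun x : ℝ => if x ∈ S then a else a + b) (μ0.restrict Sᶜ)
          = Measure.map (fun _ => a + b) (μ0.restrict Sᶜ) :=
        Measure.map_congr ((ae_restrict_iff' hS.compl).2
          (Filter.Eventually.of_forall (fun x hx => if_neg hx)))
      rw [h1, Measure.map_const, Measure.restrict_apply_univ, hPSc]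
  refine ⟨ℝ, { volume := μ0 }, hprob, (fun x => x), g, measurable_id, hg, ?_, ?_, ?_⟩
  · show Measure.map (fun x : ℝ => x) μ0 = unif 0 1
    rw [show (fun x : ℝ => x) = id from rfl, Measure.map_id, unif01, hμ0]
  · show Measure.map g μ0 = unif 0 1
    rw [unif01, ← hμ0]
    exact hkey
  · exact hmapsum

set_option maxHeartbeats 1000000 in
lemma nec (a b p : ℝ) (hb : 0 < b) (hp : 0 < p) (hp1 : p < 1)
    (ha : a = 1 - b + p * b)
    (h : IsSumDist (unif 0 1) (unif 0 1)
      (ENNReal.ofReal p • Measure.dirac a + ENNReal.ofReal (1 - p) • Measure.dirac (a + b))) :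
    ∃ k : ℕ, 0 < k ∧ 1 / b = (k : ℝ) := by
  by_contra hn
  obtain ⟨Ω, mΩ, hprob, X, Y, hX, hY, hmX, hmY, hmS⟩ := h
  set k : ℕ := ⌊1/b⌋₊ with hkdef
  have hb1 : 0 < 1/b := by positivity
  have hfl : (k:ℝ) ≤ 1/b := Nat.floor_le hb1.le
  have hne : (1:ℝ)/b ≠ (k:ℝ) := by
    intro hEq
    rcases Nat.eq_zero_or_pos k with h0 | hpos
    · rw [h0] at hEq; norm_num at hEq; simp [hEq] at hb1
    · exact hn ⟨k, hpos, hEq⟩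
  have hlt : (k:ℝ) < 1/b := lt_of_le_of_ne hfl (Ne.symm hne)
  have hup : 1/b < (k:ℝ) + 1 := by exact_mod_cast Nat.lt_floor_add_one (1/b)
  have hθ1 : (k:ℝ)*b < 1 := by
    have h1 := mul_lt_mul_of_pos_right hlt hb
    rw [one_div, inv_mul_cancel₀ (ne_of_gt hb)] at h1
    exact h1
  have hθ2 : 1 < ((k:ℝ)+1)*b := by
    have h1 := mul_lt_mul_of_pos_right hup hb
    rw [one_div, inv_mul_cancel₀ (ne_of_gt hb)] at h1
    exact h1
  set c : ℝ := p * b with hcdef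
  have hc0 : 0 < c := by positivity
  have hcb : c < b := by nlinarith
  set θ : ℝ := 1 - (k:ℝ)*b with hθdef
  have hθ0 : 0 < θ := by simp only [hθdef]; linarith
  have hθb : θ < b := by simp only [hθdef]; nlinarith
  set α : ℝ := max 0 (θ + c - b) with hαdef
  set β : ℝ := min θ c with hβdef
  have hα0 : 0 ≤ α := le_max_left _ _
  have hαcb : θ + c - b ≤ α := le_max_right _ _
  have hβθ : β ≤ θ := min_le_left _ _
  have hβc : β ≤ c := min_le_right _ _
  have hαβ : α < β := by
    refine max_lt (lt_min hθ0 hc0) (lt_min (by linarith) (by linarith))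
  set Aset : Set ℝ := ⋃ j ∈ Finset.range (k+1), Set.Ioo (α + (j:ℝ)*b) (β + (j:ℝ)*b)
    with hAdef
  set Bset : Set ℝ := ⋃ i ∈ Finset.range k, Set.Icc (a - β - (i:ℝ)*b) (a - α - (i:ℝ)*b)
    with hBdef
  have hAm : MeasurableSet Aset :=
    MeasurableSet.biUnion (Finset.range (k+1)).countable_toSet (fun _ _ => measurableSet_Ioo)
  have hBm : MeasurableSet Bset :=
    MeasurableSet.biUnion (Finset.range k).countable_toSet (fun _ _ => measurableSet_Icc)
  -- the combinatorial core
  have hkey : ∀ x y : ℝ, 0 ≤ x → x ≤ 1 → 0 ≤ y → y ≤ 1 →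
      (x + y = a ∨ x + y = a + b) → x ∈ Aset → y ∈ Bset := by
    intro x y hx0 hx1 hy0 hy1 hsum hxA
    rw [hAdef] at hxA
    simp only [Set.mem_iUnion, Finset.mem_range, Set.mem_Ioo] at hxA
    obtain ⟨j, hjk, hj1, hj2⟩ := hxA
    rcases hsum with hsa | hsab
    · -- x + y = a
      have hjlt : j < k := by
        by_contra hjge
        have hjk' : (j:ℝ) = (k:ℝ) := by
          have : j = k := by omega
          exact_mod_cast this
        -- x > α + k b ≥ θ + c - b + k b = 1 + c - b = a
        have hxgt : a < x := by
          have h2 : θ + c - b + (k:ℝ)*b ≤ α + (j:ℝ)*b := by rw [hjk']; linarith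
          have h3 : θ + (k:ℝ)*b = 1 := by simp only [hθdef]; ring
          have : a = θ + c - b + (k:ℝ)*b := by rw [ha]; simp only [hθdef, hcdef]; ring
          linarith
        linarith
      rw [hBdef]
      refine Set.mem_biUnion (Finset.mem_range.2 hjlt) ?_
      constructor <;> [linarith; linarith]
    · -- x + y = a + b
      have hj0 : 1 ≤ j := by
        by_contra hj0'
        have : j = 0 := by omega
        subst this
        have hxc : c ≤ x := by
          have : a + b - 1 = c := by rw [ha]; simp only [hcdef]; ring
          linarith
        simp only [Nat.cast_zero, zero_mul, add_zero] at hj2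
        linarith
      have hcast : ((j - 1 : ℕ):ℝ) = (j:ℝ) - 1 := by
        rw [Nat.cast_sub hj0]; norm_num
      rw [hBdef]
      refine Set.mem_biUnion (Finset.mem_range.2 (by omega : j - 1 < k)) ?_
      rw [Set.mem_Icc, hcast]
      constructor <;> nlinarith
  -- dual functions
  set f : ℝ → ℝ := Set.indicator Aset (fun _ => (-1:ℝ)) with hfdef
  set gfun : ℝ → ℝ := Set.indicator Bset (fun _ => (1:ℝ)) with hgdef
  have hfmeas : Measurable f := measurable_const.indicator hAm
  have hgmeas : Measurable gfun := measurable_const.indicator hBm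
  -- a.e. statements
  have haeX : ∀ᵐ ω ∂ℙ, X ω ∈ Set.Icc (0:ℝ) 1 := by
    have h0 : ℙ (X ⁻¹' (Set.Icc (0:ℝ) 1)ᶜ) = 0 := by
      rw [← Measure.map_apply hX measurableSet_Icc.compl, hmX, unif01,
          Measure.restrict_apply measurableSet_Icc.compl]
      simp
    rw [ae_iff]
    convert h0 using 2
    rfl
  have haeY : ∀ᵐ ω ∂ℙ, Y ω ∈ Set.Icc (0:ℝ) 1 := by
    have h0 : ℙ (Y ⁻¹' (Set.Icc (0:ℝ) 1)ᶜ) = 0 := by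
      rw [← Measure.map_apply hY measurableSet_Icc.compl, hmY, unif01,
          Measure.restrict_apply measurableSet_Icc.compl]
      simp
    rw [ae_iff]
    convert h0 using 2
    rfl
  have hmset : MeasurableSet ({a, a+b} : Set ℝ) :=
    (measurableSet_singleton (a+b)).insert a
  have haeS : ∀ᵐ ω ∂ℙ, X ω + Y ω = a ∨ X ω + Y ω = a + b := by
    have hF0 : (ENNReal.ofReal p • Measure.dirac a
        + ENNReal.ofReal (1-p) • Measure.dirac (a+b)) (({a, a+b} : Set ℝ)ᶜ) = 0 := by
      rw [Measure.add_apply, Measure.smul_apply, Measure.smul_apply,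
          Measure.dirac_apply' _ hmset.compl, Measure.dirac_apply' _ hmset.compl,
          Set.indicator_of_notMem (by simp), Set.indicator_of_notMem (by simp)]
      simp
    have h1 : ℙ ((fun ω => X ω + Y ω) ⁻¹' (({a, a+b} : Set ℝ)ᶜ)) = 0 := by
      rw [← Measure.map_apply (f := fun ω => X ω + Y ω) (hX.add hY) hmset.compl, hmS]
      exact hF0
    rw [ae_iff]
    convert h1 using 2
    try (ext ω; simp [Set.mem_preimage, Set.mem_insert_iff])
  -- integrability
  have hfX : Integrable (fun ω => f (X ω)) ℙ := by
    refine Integrable.mono' (integrable_const (1:ℝ)) ((hfmeas.comp hX).aestronglyMeasurable) ?_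
    refine Filter.Eventually.of_forall (fun ω => ?_)
    rw [Real.norm_eq_abs]
    by_cases hm : X ω ∈ Aset <;>
      simp [hfdef, Set.indicator_of_mem, Set.indicator_of_notMem, hm]
  have hgY : Integrable (fun ω => gfun (Y ω)) ℙ := by
    refine Integrable.mono' (integrable_const (1:ℝ)) ((hgmeas.comp hY).aestronglyMeasurable) ?_
    refine Filter.Eventually.of_forall (fun ω => ?_)
    rw [Real.norm_eq_abs]
    by_cases hm : Y ω ∈ Bset <;>
      simp [hgdef, Set.indicator_of_mem, Set.indicator_of_notMem, hm]
  have hint0 : 0 ≤ ∫ ω, (f (X ω) + gfun (Y ω)) ∂ℙ := by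
    refine integral_nonneg_of_ae ?_
    filter_upwards [haeX, haeY, haeS] with ω h1 h2 h3
    by_cases hm : X ω ∈ Aset
    · have hYB : Y ω ∈ Bset := hkey _ _ h1.1 h1.2 h2.1 h2.2 h3 hm
      simp [hfdef, hgdef, Set.indicator_of_mem, hm, hYB]
    · have hf0 : f (X ω) = 0 := Set.indicator_of_notMem hm _
      have hg0 : (0:ℝ) ≤ gfun (Y ω) := Set.indicator_nonneg (fun _ _ => by norm_num) _
      simp only [Pi.zero_apply]
      rw [hf0]; linarith
  have e1 : ∫ ω, f (X ω) ∂ℙ = ∫ y, f y ∂(volume.restrict (Set.Icc 0 1)) := by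
    rw [← unif01, ← hmX]
    exact (integral_map hX.aemeasurable hfmeas.aestronglyMeasurable).symm
  have e2 : ∫ ω, gfun (Y ω) ∂ℙ = ∫ y, gfun y ∂(volume.restrict (Set.Icc 0 1)) := by
    rw [← unif01, ← hmY]
    exact (integral_map hY.aemeasurable hgmeas.aestronglyMeasurable).symm
  rw [integral_add hfX hgY, e1, e2] at hint0
  set μ01 : Measure ℝ := volume.restrict (Set.Icc 0 1) with hμ01
  have hA01 : Aset ⊆ Set.Icc (0:ℝ) 1 := by
    rw [hAdef]; intro x hx
    simp only [Set.mem_iUnion, Finset.mem_range, Set.mem_Ioo] at hx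
    obtain ⟨j, hjk, h1, h2⟩ := hx
    have hj : (j:ℝ) ≤ (k:ℝ) := by exact_mod_cast Nat.lt_succ_iff.1 hjk
    have hjb : (j:ℝ)*b ≤ (k:ℝ)*b := by nlinarith
    have hjb0 : (0:ℝ) ≤ (j:ℝ)*b := by positivity
    have h3 : θ + (k:ℝ)*b = 1 := by simp only [hθdef]; ring
    constructor
    · linarith
    · linarith
  have hdisjA : (↑(Finset.range (k+1)) : Set ℕ).PairwiseDisjoint
      (fun j : ℕ => Set.Ioo (α + (j:ℝ)*b) (β + (j:ℝ)*b)) := by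
    have hwlog : ∀ i j : ℕ, i < j → Disjoint (Set.Ioo (α + (i:ℝ)*b) (β + (i:ℝ)*b))
        (Set.Ioo (α + (j:ℝ)*b) (β + (j:ℝ)*b)) := by
      intro i j hij
      refine Set.Ioo_disjoint_Ioo.2 ?_
      have h1 : (i:ℝ) + 1 ≤ (j:ℝ) := by exact_mod_cast hij
      have h2 : ((i:ℝ)+1)*b ≤ (j:ℝ)*b := mul_le_mul_of_nonneg_right h1 hb.le
      have h3 : β + (i:ℝ)*b ≤ α + (j:ℝ)*b := by nlinarith
      calc min (β + (i:ℝ)*b) (β + (j:ℝ)*b) ≤ β + (i:ℝ)*b := min_le_left _ _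
        _ ≤ α + (j:ℝ)*b := h3
        _ ≤ max (α + (i:ℝ)*b) (α + (j:ℝ)*b) := le_max_right _ _
    intro i _ j _ hij
    rcases lt_or_gt_of_ne hij with h | h
    · exact hwlog i j h
    · exact (hwlog j i h).symm
  have hvolA : μ01 Aset = ((k+1 : ℕ) : ℝ≥0∞) * ENNReal.ofReal (β - α) := by
    rw [hμ01, Measure.restrict_apply hAm, Set.inter_eq_self_of_subset_left hA01, hAdef,
        measure_biUnion_finset hdisjA (fun _ _ => measurableSet_Ioo)]
    have hv : ∀ j ∈ Finset.range (k+1), volume (Set.Ioo (α + (j:ℝ)*b) (β + (j:ℝ)*b))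
        = ENNReal.ofReal (β - α) := by
      intro j _; rw [Real.volume_Ioo]; congr 1; ring
    rw [Finset.sum_congr rfl hv, Finset.sum_const, Finset.card_range, nsmul_eq_mul]
  have hintf : ∫ y, f y ∂μ01 = -(((k:ℝ)+1) * (β - α)) := by
    rw [hfdef, integral_indicator hAm, setIntegral_const, measureReal_def, hvolA, ENNReal.toReal_mul,
        ENNReal.toReal_natCast, ENNReal.toReal_ofReal (by linarith : (0:ℝ) ≤ β - α), smul_eq_mul]
    push_cast
    ring
  have hvolB : μ01 Bset ≤ ((k:ℕ) : ℝ≥0∞) * ENNReal.ofReal (β - α) := by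
    have h1 : μ01 Bset ≤ volume Bset := by
      rw [hμ01, Measure.restrict_apply hBm]
      exact measure_mono Set.inter_subset_left
    refine le_trans h1 ?_
    rw [hBdef]
    refine le_trans (measure_biUnion_finset_le _ _) ?_
    have hv : ∀ i ∈ Finset.range k, volume (Set.Icc (a - β - (i:ℝ)*b) (a - α - (i:ℝ)*b))
        = ENNReal.ofReal (β - α) := by
      intro i _; rw [Real.volume_Icc]; congr 1; ring
    rw [Finset.sum_congr rfl hv, Finset.sum_const, Finset.card_range, nsmul_eq_mul]
  have hintg : ∫ y, gfun y ∂μ01 ≤ (k:ℝ) * (β - α) := by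
    rw [hgdef, integral_indicator hBm, setIntegral_const, smul_eq_mul, mul_one]
    have h2 : (((k:ℕ) : ℝ≥0∞) * ENNReal.ofReal (β - α)) ≠ ⊤ :=
      ENNReal.mul_ne_top (ENNReal.natCast_ne_top k) ENNReal.ofReal_ne_top
    have h3 := ENNReal.toReal_mono h2 hvolB
    rw [ENNReal.toReal_mul, ENNReal.toReal_natCast,
        ENNReal.toReal_ofReal (by linarith : (0:ℝ) ≤ β - α)] at h3
    exact h3
  rw [hintf] at hint0
  nlinarith [hint0, hintg, hαβ]

theorem stmt6 (a b p : ℝ) (hb : 0 < b) (hp : 0 < p) (hp1 : p < 1)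
    (F : Measure ℝ)
    (hF : F = ENNReal.ofReal p • Measure.dirac a
            + ENNReal.ofReal (1 - p) • Measure.dirac (a + b))
    (hmean : p * a + (1 - p) * (a + b) = 1) :
    IsSumDist (unif 0 1) (unif 0 1) F ↔ ∃ k : ℕ, 0 < k ∧ 1 / b = (k : ℝ) := by
  have ha : a = 1 - b + p * b := by linear_combination hmean
  constructor
  · intro h
    rw [hF] at h
    exact nec a b p hb hp hp1 ha h
  · rintro ⟨k, hk, hkb⟩
    have hkb' : (k : ℝ) * b = 1 := by
      field_simp at hkb
      linarith
    rw [hF]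
    exact suff a b p hb hp hp1 k hk hkb' ha
end

section
/- Let Z be a random variable with distribution supported in {b−k, b−k+1, ..., b} (integer-spaced atoms), k ∈ ℕ, b ∈ ℝ, with mean 0. If there exist X ~ U[0,T] and Y ~ U[−T,0] (T > 0) with Z = X + Y almost surely, then at least one of b and T is an integer. -/
open MeasureTheory ProbabilityTheory Set

lemma exp_unif_integral {a b : ℝ} (hab : a < b) {c : ℂ} (hc : c ≠ 0) :
    ∫ x, Complex.exp (c * x) ∂(unif a b)
      = (b - a)⁻¹ • ((Complex.exp (c * b) - Complex.exp (c * a)) / c) := by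
  rw [unif, integral_smul_measure, ENNReal.toReal_inv, ENNReal.toReal_ofReal (by linarith),
    MeasureTheory.integral_Icc_eq_integral_Ioc,
    ← intervalIntegral.integral_of_le hab.le, integral_exp_mul_complex hc]

theorem stmt10 (k : ℕ) (b T : ℝ) (hT : 0 < T)
    (Ω : Type) [MeasureSpace Ω] [IsProbabilityMeasure (ℙ : Measure Ω)]
    (X Y Z : Ω → ℝ) (hX : Measurable X) (hY : Measurable Y)
    (hXd : Measure.map X ℙ = unif 0 T) (hYd : Measure.map Y ℙ = unif (-T) 0)
    (hZ : ∀ᵐ ω ∂ℙ, Z ω = X ω + Y ω)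
    (hsupp : ∀ᵐ ω ∂ℙ, ∃ i : ℕ, i ≤ k ∧ Z ω = b - (i : ℝ))
    (hmean : ∫ ω, Z ω ∂ℙ = 0) :
    (∃ m : ℤ, b = (m : ℝ)) ∨ (∃ m : ℤ, T = (m : ℝ)) := by
  by_cases hTint : ∃ m : ℤ, T = (m : ℝ)
  · exact Or.inr hTint
  left
  set c : ℂ := 2 * Real.pi * Complex.I with hc_def
  have hc : c ≠ 0 := Complex.two_pi_I_ne_zero
  -- pointwise a.e. identity
  have hae : ∀ᵐ ω ∂ℙ, Complex.exp (c * X ω)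
      = Complex.exp (c * b) * Complex.exp (-c * Y ω) := by
    filter_upwards [hZ, hsupp] with ω h1 h2
    obtain ⟨i, _, h3⟩ := h2
    have hx : (X ω : ℂ) = (b : ℂ) - ((i : ℝ) : ℂ) - Y ω := by
      have hxr : X ω = b - (i : ℝ) - Y ω := by
        rw [h3] at h1; linarith
      rw [hxr]; push_cast; ring
    rw [hx]
    have hsplit : c * ((b : ℂ) - ((i : ℝ) : ℂ) - Y ω)
        = c * b + (-((i : ℝ) : ℂ)) * (2 * Real.pi * Complex.I) + (-c * Y ω) := by
      rw [hc_def]; ring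
    have h4 : Complex.exp ((-((i : ℝ) : ℂ)) * (2 * Real.pi * Complex.I)) = 1 := by
      rw [show (-((i : ℝ) : ℂ)) = ((-(i : ℤ) : ℤ) : ℂ) by push_cast; ring,
        Complex.exp_int_mul, Complex.exp_two_pi_mul_I, one_zpow]
    rw [hsplit, Complex.exp_add, Complex.exp_add, h4, mul_one]
  -- integrate
  have hint : ∫ ω, Complex.exp (c * X ω) ∂ℙ
      = Complex.exp (c * b) * ∫ ω, Complex.exp (-c * Y ω) ∂ℙ := by
    rw [integral_congr_ae hae, MeasureTheory.integral_const_mul]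
  have hmX : ∫ ω, Complex.exp (c * X ω) ∂ℙ = ∫ x, Complex.exp (c * x) ∂(unif 0 T) := by
    rw [← hXd, integral_map hX.aemeasurable]
    exact (Continuous.aestronglyMeasurable (by continuity))
  have hmY : ∫ ω, Complex.exp (-c * Y ω) ∂ℙ = ∫ x, Complex.exp (-c * x) ∂(unif (-T) 0) := by
    rw [← hYd, integral_map hY.aemeasurable]
    exact (Continuous.aestronglyMeasurable (by continuity))
  set v : ℂ := T⁻¹ • ((Complex.exp (c * T) - 1) / c) with hv
  have hXval : ∫ x, Complex.exp (c * x) ∂(unif 0 T) = v := by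
    rw [exp_unif_integral hT hc, hv, Complex.real_smul, Complex.real_smul]
    push_cast
    rw [sub_zero, mul_zero, Complex.exp_zero]
  have hYval : ∫ x, Complex.exp (-c * x) ∂(unif (-T) 0) = v := by
    rw [exp_unif_integral (by linarith : -T < (0:ℝ)) (neg_ne_zero.mpr hc)]
    have h1 : -c * ((-T : ℝ) : ℂ) = c * T := by push_cast; ring
    rw [h1, hv, Complex.real_smul, Complex.real_smul]
    push_cast
    rw [zero_sub, neg_neg, mul_zero, Complex.exp_zero, div_neg, ← neg_div, neg_sub]
  have key : v = Complex.exp (c * b) * v := by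
    rw [hmX, hXval, hmY, hYval] at hint
    exact hint
  have hvne : v ≠ 0 := by
    have hexpT : Complex.exp (c * T) ≠ 1 := by
      intro h
      rw [Complex.exp_eq_one_iff] at h
      obtain ⟨n, hn⟩ := h
      rw [hc_def] at hn
      refine hTint ⟨n, ?_⟩
      have hTc : (T : ℂ) = (n : ℂ) :=
        mul_left_cancel₀ Complex.two_pi_I_ne_zero (by rw [hn]; ring)
      exact_mod_cast hTc
    simp only [hv, smul_ne_zero_iff]
    exact ⟨inv_ne_zero hT.ne', div_ne_zero (sub_ne_zero.mpr hexpT) hc⟩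
  have hexpb : Complex.exp (c * b) = 1 :=
    mul_right_cancel₀ hvne (by rw [one_mul, ← key])
  rw [Complex.exp_eq_one_iff] at hexpb
  obtain ⟨n, hn⟩ := hexpb
  rw [hc_def] at hn
  refine ⟨n, ?_⟩
  have hbc : (b : ℂ) = (n : ℂ) :=
    mul_left_cancel₀ Complex.two_pi_I_ne_zero (by rw [hn]; ring)
  exact_mod_cast hbc
end

section
/- Let n ≥ 3 and 0 ≤ a ≤ a + b ≤ n. The minimum of P(S ∈ (a, a+b)) over all S that are sums of n standard uniform random variables equals max{2b/n − 1, 0}. -/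
open MeasureTheory ProbabilityTheory Set

/-- mixing triple -/
noncomputable def Y3 (i : ℕ) (v : ℝ) : ℝ :=
  if i = 0 then v
  else if i = 1 then (if v < 1/2 then v + 1/2 else v - 1/2)
  else (if v < 1/2 then 1 - 2*v else 2 - 2*v)

noncomputable def Ymix (n i : ℕ) (v : ℝ) : ℝ :=
  if Odd n ∧ i < 3 then Y3 i v else if Even i then v else 1 - v

lemma measurable_Y3 (i : ℕ) : Measurable (Y3 i) := by
  unfold Y3
  split_ifs with h1 h2
  · exact measurable_id
  · exact Measurable.ite measurableSet_Iio (by fun_prop) (by fun_prop)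
  · exact Measurable.ite measurableSet_Iio (by fun_prop) (by fun_prop)

lemma measurable_Ymix (n i : ℕ) : Measurable (Ymix n i) := by
  unfold Ymix
  split_ifs with h1 h2
  · exact measurable_Y3 i
  · exact measurable_id
  · fun_prop

lemma Y3_sum (v : ℝ) : Y3 0 v + Y3 1 v + Y3 2 v = 3/2 := by
  unfold Y3
  by_cases h : v < 1/2 <;> simp only [if_pos, if_neg, h, if_true, if_false,
    reduceIte] <;> norm_num <;> ring

lemma pair_sum (v : ℝ) (k : ℕ) :
    ∑ i ∈ Finset.range (2*k), (if Even i then v else 1 - v) = k := by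
  induction k with
  | zero => simp
  | succ k ih =>
    have h2 : 2*(k+1) = (2*k) + 1 + 1 := by ring
    rw [h2, Finset.sum_range_succ, Finset.sum_range_succ, ih]
    have h1 : Even (2*k) := even_two_mul k
    have h3 : ¬ Even (2*k+1) := by simp [Nat.even_add_one, h1]
    simp only [if_pos h1, if_neg h3]
    push_cast; ring

lemma pairflip_sum (v : ℝ) (k : ℕ) :
    ∑ i ∈ Finset.range (2*k), (if Even i then 1 - v else v) = k := by
  have := pair_sum (1 - v) k
  simpa using this

lemma Ymix_sum (n : ℕ) (hn : 3 ≤ n) (v : ℝ) :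
    ∑ i ∈ Finset.range n, Ymix n i v = n/2 := by
  rcases Nat.even_or_odd n with he | ho
  · have hno : ¬ Odd n := by simp [Nat.not_odd_iff_even, he]
    have hY : ∀ i, Ymix n i v = if Even i then v else 1 - v := by
      intro i; simp [Ymix, hno]
    obtain ⟨k, hk⟩ := he
    have hk2 : n = 2*k := by omega
    rw [Finset.sum_congr rfl (fun i _ => hY i), hk2, pair_sum]
    push_cast; ring
  · obtain ⟨k, hk⟩ := ho
    have hk1 : 1 ≤ k := by omega
    have hsplit : ∑ i ∈ Finset.range n, Ymix n i v
        = ∑ i ∈ Finset.range 3, Ymix n i v + ∑ i ∈ Finset.Ico 3 n, Ymix n i v := by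
      rw [Finset.range_eq_Ico, ← Finset.sum_Ico_consecutive _ (by omega : 0 ≤ 3) (by omega : 3 ≤ n), Finset.range_eq_Ico]
    have h1 : ∑ i ∈ Finset.range 3, Ymix n i v = 3/2 := by
      have : ∀ i < 3, Ymix n i v = Y3 i v := by
        intro i hi; simp [Ymix, hi, Nat.odd_iff.2 (by omega : n % 2 = 1)]
      rw [Finset.sum_range_succ, Finset.sum_range_succ, Finset.sum_range_succ]
      rw [this 0 (by omega), this 1 (by omega), this 2 (by omega)]
      simpa using Y3_sum v
    have h2 : ∑ i ∈ Finset.Ico 3 n, Ymix n i v = (k - 1 : ℝ) := by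
      rw [Finset.sum_Ico_eq_sum_range]
      have hcongr : ∀ j ∈ Finset.range (n - 3), Ymix n (3 + j) v = if Even j then 1 - v else v := by
        intro j _
        have hodd : Odd n := Nat.odd_iff.2 (by omega)
        have : ¬ (3 + j < 3) := by omega
        simp only [Ymix, this, and_false, if_false]
        rcases Nat.even_or_odd j with hj | hj
        · have : ¬ Even (3 + j) := by
            simp [Nat.even_add, Nat.even_iff, Nat.odd_iff] at *
            omega
          simp [this, hj]
        · have : Even (3 + j) := by
            rcases hj with ⟨m, hm⟩; exact ⟨2 + m, by omega⟩
          have hjne : ¬ Even j := Nat.not_even_iff_odd.2 hj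
          simp [this, hjne]
      rw [Finset.sum_congr rfl hcongr]
      have hnm : n - 3 = 2*(k-1) := by omega
      rw [hnm, pairflip_sum]
      have : ((k - 1 : ℕ) : ℝ) = (k : ℝ) - 1 := by
        push_cast [Nat.cast_sub hk1]; ring
      rw [this]
    rw [hsplit, h1, h2, hk]
    push_cast; ring

section Maps
open MeasureTheory Set

lemma unif_eq_Icc : unif 0 1 = volume.restrict (Icc 0 1) := by
  simp [unif]

lemma restrict_Ico_eq (c d : ℝ) :
    volume.restrict (Ico c d) = volume.restrict (Icc c d) :=
  Measure.restrict_congr_set Ico_ae_eq_Icc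

lemma restrict_Ioc_eq (c d : ℝ) :
    volume.restrict (Ioc c d) = volume.restrict (Icc c d) :=
  Measure.restrict_congr_set Ioc_ae_eq_Icc

lemma map_affine (k c : ℝ) (hk : k ≠ 0) {s : Set ℝ} (hs : MeasurableSet s) :
    Measure.map (fun x => k * x + c) (volume.restrict ((fun x : ℝ => k * x + c) ⁻¹' s))
      = ENNReal.ofReal |k⁻¹| • volume.restrict s := by
  have hg : Measurable fun x : ℝ => k * x + c := by fun_prop
  rw [← Measure.restrict_map hg hs]
  have hmap : Measure.map (fun x : ℝ => k * x + c) volume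
      = ENNReal.ofReal |k⁻¹| • volume := by
    have h1 : (fun x : ℝ => k * x + c) = (fun x : ℝ => x + c) ∘ (fun x : ℝ => k * x) := rfl
    rw [h1, ← Measure.map_map (by fun_prop) (by fun_prop)]
    rw [show (fun x : ℝ => k * x) = (k * ·) from rfl, Real.map_volume_mul_left hk,
      Measure.map_smul]
    congr 1
    exact map_add_right_eq_self volume c
  rw [hmap, Measure.restrict_smul]

lemma map_ymix_id : Measure.map (fun v : ℝ => v) (volume.restrict (Ico (0:ℝ) 1)) = unif 0 1 := by
  rw [show (fun v : ℝ => v) = id from rfl, Measure.map_id, restrict_Ico_eq, unif_eq_Icc]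

lemma map_ymix_refl :
    Measure.map (fun v : ℝ => 1 - v) (volume.restrict (Ico (0:ℝ) 1)) = unif 0 1 := by
  have h : (fun v : ℝ => 1 - v) = fun v : ℝ => (-1) * v + 1 := by funext v; ring
  have hpre : ((fun v : ℝ => (-1) * v + 1) ⁻¹' (Ioc 0 1)) = Ico (0:ℝ) 1 := by
    ext v
    simp only [mem_preimage, mem_Ioc, mem_Ico]
    constructor
    · rintro ⟨h1, h2⟩; constructor <;> linarith
    · rintro ⟨h1, h2⟩; constructor <;> linarith
  rw [h, ← hpre, map_affine (-1) 1 (by norm_num) measurableSet_Ioc]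
  norm_num
  rw [restrict_Ioc_eq, unif_eq_Icc]

lemma map_ymix_shift :
    Measure.map (fun v : ℝ => if v < 1/2 then v + 1/2 else v - 1/2)
      (volume.restrict (Ico (0:ℝ) 1)) = unif 0 1 := by
  have hmeas : Measurable (fun v : ℝ => if v < 1/2 then v + 1/2 else v - 1/2) :=
    Measurable.ite measurableSet_Iio (by fun_prop) (by fun_prop)
  have hsplit : volume.restrict (Ico (0:ℝ) 1)
      = volume.restrict (Ico (0:ℝ) (1/2)) + volume.restrict (Ico (1/2:ℝ) 1) := by
    rw [← Measure.restrict_union (Set.Ico_disjoint_Ico_same (a:=(0:ℝ)) (b:=(1/2:ℝ)) (c:=(1:ℝ))) measurableSet_Ico,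
      Ico_union_Ico_eq_Ico (by norm_num) (by norm_num)]
  rw [hsplit, Measure.map_add _ _ hmeas]
  have e1 : Measure.map (fun v : ℝ => if v < 1/2 then v + 1/2 else v - 1/2)
      (volume.restrict (Ico (0:ℝ) (1/2)))
      = volume.restrict (Ico (1/2:ℝ) 1) := by
    rw [Measure.map_congr (f := fun v : ℝ => if v < 1/2 then v + 1/2 else v - 1/2)
      (g := fun v : ℝ => 1 * v + 1/2) ?_]
    · have hpre : ((fun v : ℝ => 1 * v + 1/2) ⁻¹' (Ico (1/2 : ℝ) 1)) = Ico (0:ℝ) (1/2) := by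
        ext v; simp only [mem_preimage, mem_Ico]; constructor <;> intro h <;>
          constructor <;> linarith [h.1, h.2]
      rw [← hpre, map_affine 1 (1/2) one_ne_zero measurableSet_Ico]
      norm_num
    · filter_upwards [ae_restrict_mem measurableSet_Ico] with v hv
      rw [if_pos hv.2]; ring
  have e2 : Measure.map (fun v : ℝ => if v < 1/2 then v + 1/2 else v - 1/2)
      (volume.restrict (Ico (1/2:ℝ) 1))
      = volume.restrict (Ico (0:ℝ) (1/2)) := by
    rw [Measure.map_congr (f := fun v : ℝ => if v < 1/2 then v + 1/2 else v - 1/2)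
      (g := fun v : ℝ => 1 * v + (-(1/2))) ?_]
    · have hpre : ((fun v : ℝ => 1 * v + (-(1/2))) ⁻¹' (Ico (0 : ℝ) (1/2))) = Ico (1/2:ℝ) 1 := by
        ext v; simp only [mem_preimage, mem_Ico]; constructor <;> intro h <;>
          constructor <;> linarith [h.1, h.2]
      rw [← hpre, map_affine 1 (-(1/2)) one_ne_zero measurableSet_Ico]
      norm_num
    · filter_upwards [ae_restrict_mem measurableSet_Ico] with v hv
      have : ¬ v < 1/2 := not_lt.2 hv.1
      rw [if_neg this]; ring
  rw [e1, e2, ← Measure.restrict_union (Set.Ico_disjoint_Ico_same (a:=(0:ℝ)) (b:=(1/2:ℝ)) (c:=(1:ℝ))).symm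
    measurableSet_Ico]
  rw [union_comm, Ico_union_Ico_eq_Ico (by norm_num) (by norm_num), restrict_Ico_eq, unif_eq_Icc]

lemma map_ymix_tent :
    Measure.map (fun v : ℝ => if v < 1/2 then 1 - 2*v else 2 - 2*v)
      (volume.restrict (Ico (0:ℝ) 1)) = unif 0 1 := by
  have hmeas : Measurable (fun v : ℝ => if v < 1/2 then 1 - 2*v else 2 - 2*v) :=
    Measurable.ite measurableSet_Iio (by fun_prop) (by fun_prop)
  have hsplit : volume.restrict (Ico (0:ℝ) 1)
      = volume.restrict (Ico (0:ℝ) (1/2)) + volume.restrict (Ico (1/2:ℝ) 1) := by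
    rw [← Measure.restrict_union (Set.Ico_disjoint_Ico_same (a:=(0:ℝ)) (b:=(1/2:ℝ)) (c:=(1:ℝ))) measurableSet_Ico,
      Ico_union_Ico_eq_Ico (by norm_num) (by norm_num)]
  rw [hsplit, Measure.map_add _ _ hmeas]
  have e1 : Measure.map (fun v : ℝ => if v < 1/2 then 1 - 2*v else 2 - 2*v)
      (volume.restrict (Ico (0:ℝ) (1/2)))
      = ENNReal.ofReal |(-2 : ℝ)⁻¹| • volume.restrict (Ioc (0:ℝ) 1) := by
    rw [Measure.map_congr (f := fun v : ℝ => if v < 1/2 then 1 - 2*v else 2 - 2*v)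
      (g := fun v : ℝ => (-2) * v + 1) ?_]
    · have hpre : ((fun v : ℝ => (-2) * v + 1) ⁻¹' (Ioc (0 : ℝ) 1)) = Ico (0:ℝ) (1/2) := by
        ext v; simp only [mem_preimage, mem_Ioc, mem_Ico]; constructor <;> intro h <;>
          constructor <;> linarith [h.1, h.2]
      rw [← hpre, map_affine (-2) 1 (by norm_num) measurableSet_Ioc]
    · filter_upwards [ae_restrict_mem measurableSet_Ico] with v hv
      rw [if_pos hv.2]; ring
  have e2 : Measure.map (fun v : ℝ => if v < 1/2 then 1 - 2*v else 2 - 2*v)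
      (volume.restrict (Ico (1/2:ℝ) 1))
      = ENNReal.ofReal |(-2 : ℝ)⁻¹| • volume.restrict (Ioc (0:ℝ) 1) := by
    rw [Measure.map_congr (f := fun v : ℝ => if v < 1/2 then 1 - 2*v else 2 - 2*v)
      (g := fun v : ℝ => (-2) * v + 2) ?_]
    · have hpre : ((fun v : ℝ => (-2) * v + 2) ⁻¹' (Ioc (0 : ℝ) 1)) = Ico (1/2:ℝ) 1 := by
        ext v; simp only [mem_preimage, mem_Ioc, mem_Ico]; constructor <;> intro h <;>
          constructor <;> linarith [h.1, h.2]
      rw [← hpre, map_affine (-2) 2 (by norm_num) measurableSet_Ioc]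
    · filter_upwards [ae_restrict_mem measurableSet_Ico] with v hv
      have : ¬ v < 1/2 := not_lt.2 hv.1
      rw [if_neg this]; ring
  rw [e1, e2, ← add_smul]
  have habs : |(-2 : ℝ)⁻¹| = 1/2 := by norm_num
  have : ENNReal.ofReal |(-2 : ℝ)⁻¹| + ENNReal.ofReal |(-2 : ℝ)⁻¹| = 1 := by
    rw [habs, ← ENNReal.ofReal_add (by norm_num) (by norm_num)]
    norm_num
  rw [this, one_smul, restrict_Ioc_eq, unif_eq_Icc]

lemma map_Ymix (n i : ℕ) :
    Measure.map (Ymix n i) (volume.restrict (Ico (0:ℝ) 1)) = unif 0 1 := by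
  by_cases h : Odd n ∧ i < 3
  · have hY : Ymix n i = Y3 i := by funext v; simp [Ymix, h]
    rw [hY]
    obtain ⟨-, hi3⟩ := h
    interval_cases i
    · rw [show Y3 0 = fun v : ℝ => v by funext v; simp [Y3]]
      exact map_ymix_id
    · rw [show Y3 1 = fun v : ℝ => if v < 1/2 then v + 1/2 else v - 1/2 by
        funext v; simp [Y3]]
      exact map_ymix_shift
    · rw [show Y3 2 = fun v : ℝ => if v < 1/2 then 1 - 2*v else 2 - 2*v by
        funext v; simp [Y3]]
      exact map_ymix_tent
  · by_cases he : Even i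
    · have hY : Ymix n i = fun v : ℝ => v := by funext v; simp [Ymix, h, he]
      rw [hY]; exact map_ymix_id
    · have hY : Ymix n i = fun v : ℝ => 1 - v := by funext v; simp [Ymix, h, he]
      rw [hY]; exact map_ymix_refl

end Maps

section Region
open MeasureTheory Set

lemma map_region (n i : ℕ) (t m : ℝ) (hm : 0 < m) :
    Measure.map (fun ω => t + m * Ymix n i ((ω - t)/m)) (volume.restrict (Ico t (t+m)))
      = volume.restrict (Ico t (t+m)) := by
  set g1 : ℝ → ℝ := fun ω => (1/m) * ω + (-(t/m)) with hg1
  set g2 : ℝ → ℝ := fun y => m * y + t with hg2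
  have hfg : (fun ω => t + m * Ymix n i ((ω - t)/m)) = g2 ∘ (Ymix n i) ∘ g1 := by
    funext ω
    have harg : (ω - t)/m = (1/m) * ω + (-(t/m)) := by field_simp; ring
    simp only [hg1, hg2, Function.comp_apply, ← harg]
    ring
  have hm1 : Measurable g1 := by fun_prop
  have hm2 : Measurable g2 := by fun_prop
  rw [hfg, ← Measure.map_map hm2 ((measurable_Ymix n i).comp hm1),
    ← Measure.map_map (measurable_Ymix n i) hm1]
  have hpre1 : g1 ⁻¹' (Ico 0 1) = Ico t (t+m) := by
    ext ω
    simp only [hg1, mem_preimage, mem_Ico]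
    rw [show (1/m) * ω + (-(t/m)) = (ω - t)/m by field_simp; ring]
    rw [le_div_iff₀ hm, div_lt_one hm]
    constructor <;> rintro ⟨h1, h2⟩ <;> exact ⟨by linarith, by linarith⟩
  have step1 : Measure.map g1 (volume.restrict (Ico t (t+m)))
      = ENNReal.ofReal m • volume.restrict (Ico (0:ℝ) 1) := by
    rw [← hpre1, hg1, map_affine (1/m) (-(t/m)) (by positivity) measurableSet_Ico]
    congr 2
    rw [abs_of_pos (by positivity : (0:ℝ) < (1/m)⁻¹)]
    field_simp
  rw [step1, Measure.map_smul, map_Ymix, unif_eq_Icc, ← restrict_Ico_eq]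
  have hpre2 : g2 ⁻¹' (Ico t (t+m)) = Ico (0:ℝ) 1 := by
    ext y
    simp only [hg2, mem_preimage, mem_Ico]
    constructor
    · rintro ⟨h1, h2⟩
      constructor
      · nlinarith
      · nlinarith
    · rintro ⟨h1, h2⟩
      constructor
      · nlinarith
      · nlinarith
  rw [← hpre2, hg2, Measure.map_smul, map_affine m t hm.ne' measurableSet_Ico, smul_smul,
    abs_of_pos (by positivity : (0:ℝ) < m⁻¹), ← ENNReal.ofReal_mul hm.le,
    mul_inv_cancel₀ hm.ne', ENNReal.ofReal_one, one_smul]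

noncomputable def Xc (n : ℕ) (t1 t2 : ℝ) (i : ℕ) (ω : ℝ) : ℝ :=
  if ω < t1 then 0 + t1 * Ymix n i ((ω - 0)/t1)
  else if ω < t2 then t1 + (t2 - t1) * Ymix n i ((ω - t1)/(t2 - t1))
  else t2 + (1 - t2) * Ymix n i ((ω - t2)/(1 - t2))

lemma measurable_Xc (n : ℕ) (t1 t2 : ℝ) (i : ℕ) : Measurable (Xc n t1 t2 i) := by
  unfold Xc
  refine Measurable.ite measurableSet_Iio ?_ (Measurable.ite measurableSet_Iio ?_ ?_)
  · exact (measurable_const.add (((measurable_Ymix n i).comp (by fun_prop)).const_mul t1))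
  · exact (measurable_const.add (((measurable_Ymix n i).comp (by fun_prop)).const_mul _))
  · exact (measurable_const.add (((measurable_Ymix n i).comp (by fun_prop)).const_mul _))

lemma map_Xc (n i : ℕ) (t1 t2 : ℝ) (h0 : 0 ≤ t1) (h12 : t1 ≤ t2) (h21 : t2 ≤ 1) :
    Measure.map (Xc n t1 t2 i) (volume.restrict (Ico (0:ℝ) 1)) = unif 0 1 := by
  have hsplit : volume.restrict (Ico (0:ℝ) 1)
      = volume.restrict (Ico 0 t1) + volume.restrict (Ico t1 t2)
        + volume.restrict (Ico t2 1) := by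
    rw [← Measure.restrict_union (Set.Ico_disjoint_Ico_same) measurableSet_Ico,
      Ico_union_Ico_eq_Ico h0 h12,
      ← Measure.restrict_union (Set.Ico_disjoint_Ico_same) measurableSet_Ico,
      Ico_union_Ico_eq_Ico (h0.trans h12) h21]
  have R : ∀ (t m : ℝ) (hb : ∀ ω ∈ Ico t (t + m),
        Xc n t1 t2 i ω = t + m * Ymix n i ((ω - t)/m)), 0 ≤ m →
      Measure.map (Xc n t1 t2 i) (volume.restrict (Ico t (t + m)))
        = volume.restrict (Ico t (t + m)) := by
    intro t m hb hm0
    rcases eq_or_lt_of_le hm0 with hm | hm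
    · rw [show Ico t (t + m) = ∅ by rw [Ico_eq_empty_iff]; intro hc; nlinarith]
      simp
    · rw [Measure.map_congr (g := fun ω => t + m * Ymix n i ((ω - t)/m)) ?_]
      · exact map_region n i t m hm
      · filter_upwards [ae_restrict_mem measurableSet_Ico] with ω hω
        exact hb ω hω
  have R1 : Measure.map (Xc n t1 t2 i) (volume.restrict (Ico 0 t1))
      = volume.restrict (Ico 0 t1) := by
    have := R 0 t1 ?_ h0
    · simpa using this
    · intro ω hω
      rw [zero_add] at hω
      simp only [Xc, if_pos hω.2]
  have R2 : Measure.map (Xc n t1 t2 i) (volume.restrict (Ico t1 t2))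
      = volume.restrict (Ico t1 t2) := by
    have := R t1 (t2 - t1) ?_ (by linarith)
    · rw [show t1 + (t2 - t1) = t2 by ring] at this
      exact this
    · intro ω hω
      rw [show t1 + (t2 - t1) = t2 by ring] at hω
      have h1 : ¬ ω < t1 := not_lt.2 hω.1
      simp only [Xc, if_neg h1, if_pos hω.2]
  have R3 : Measure.map (Xc n t1 t2 i) (volume.restrict (Ico t2 1))
      = volume.restrict (Ico t2 1) := by
    have := R t2 (1 - t2) ?_ (by linarith)
    · rw [show t2 + (1 - t2) = 1 by ring] at this
      exact this
    · intro ω hω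
      rw [show t2 + (1 - t2) = 1 by ring] at hω
      have h1 : ¬ ω < t1 := not_lt.2 (le_trans h12 hω.1)
      have h2 : ¬ ω < t2 := not_lt.2 hω.1
      simp only [Xc, if_neg h1, if_neg h2]
  rw [hsplit, Measure.map_add _ _ (measurable_Xc n t1 t2 i),
    Measure.map_add _ _ (measurable_Xc n t1 t2 i), R1, R2, R3, ← hsplit,
    restrict_Ico_eq, unif_eq_Icc]

lemma sum_Xc (n : ℕ) (hn : 3 ≤ n) (t1 t2 : ℝ) (ω : ℝ) :
    ∑ i : Fin n, Xc n t1 t2 i.val ω =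
      if ω < t1 then t1 * (n/2)
      else if ω < t2 then n * t1 + (t2 - t1) * (n/2)
      else n * t2 + (1 - t2) * (n/2) := by
  have hsum : ∀ (c m v : ℝ), ∑ i : Fin n, (c + m * Ymix n i.val v) = n * c + m * (n/2) := by
    intro c m v
    rw [Fin.sum_univ_eq_sum_range (fun i => c + m * Ymix n i v) n]
    rw [Finset.sum_add_distrib, Finset.sum_const, ← Finset.mul_sum, Ymix_sum n hn,
      Finset.card_range]
    simp [nsmul_eq_mul]
  unfold Xc
  split_ifs with h1 h2
  · rw [hsum]; ring
  · rw [hsum]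
  · rw [hsum]

end Region

section Tail
open MeasureTheory Set

lemma integral_gmax (t : ℝ) (ht0 : 0 ≤ t) (ht1 : t ≤ 1) :
    ∫ x, max (t - x) 0 ∂(unif 0 1) = t^2/2 := by
  rw [unif_eq_Icc, ← restrict_Ioc_eq,
    ← intervalIntegral.integral_of_le (by norm_num : (0:ℝ) ≤ 1)]
  have hi1 : IntervalIntegrable (fun x : ℝ => max (t - x) 0) volume 0 t :=
    (Continuous.max (by continuity) continuous_const).intervalIntegrable 0 t
  have hi2 : IntervalIntegrable (fun x : ℝ => max (t - x) 0) volume t 1 :=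
    (Continuous.max (by continuity) continuous_const).intervalIntegrable t 1
  rw [← intervalIntegral.integral_add_adjacent_intervals hi1 hi2]
  have e1 : ∫ x in (0:ℝ)..t, max (t - x) 0 = ∫ x in (0:ℝ)..t, (t - x) := by
    apply intervalIntegral.integral_congr
    intro x hx
    rw [uIcc_of_le ht0] at hx
    exact max_eq_left (by linarith [hx.2])
  have e2 : ∫ x in t..(1:ℝ), max (t - x) 0 = 0 := by
    have hcg : EqOn (fun x : ℝ => max (t - x) 0) (fun _ => (0:ℝ)) (uIcc t 1) := by
      intro x hx
      rw [uIcc_of_le ht1] at hx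
      exact max_eq_right (by linarith [hx.1])
    rw [intervalIntegral.integral_congr hcg]
    simp
  rw [e1, e2, intervalIntegral.integral_sub intervalIntegrable_const
    intervalIntegral.intervalIntegrable_id, intervalIntegral.integral_const,
    integral_id]
  simp
  ring

lemma tail_low {Ω : Type} [MeasureSpace Ω] (hP : IsProbabilityMeasure (ℙ : Measure Ω))
    {n : ℕ} (X : Fin n → Ω → ℝ) (hXm : ∀ i, Measurable (X i))
    (hXd : ∀ i, Measure.map (X i) ℙ = unif 0 1)
    (a t K : ℝ) (ht0 : 0 ≤ t) (ht1 : t ≤ 1) (hK : 0 ≤ K) (h1 : 1 ≤ K * (n * t - a)) :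
    (ℙ {ω | ∑ i, X i ω ≤ a}).toReal ≤ K * n * (t^2/2) := by
  haveI := hP
  set S : Ω → ℝ := fun ω => ∑ i, X i ω with hS
  have hSmeas : Measurable S := by
    apply Finset.measurable_sum
    intro i _
    exact hXm i
  set g : ℝ → ℝ := fun u => max (t - u) 0 with hg
  have hgc : Continuous g := Continuous.max (by continuity) continuous_const
  have hgnn : ∀ x, 0 ≤ g x := fun x => le_max_right _ _
  have hEmeas : MeasurableSet {ω | S ω ≤ a} := measurableSet_le hSmeas measurable_const
  have key : ∀ ω, Set.indicator {ω | S ω ≤ a} (fun _ => (1:ℝ)) ω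
      ≤ K * ∑ i, g (X i ω) := by
    intro ω
    by_cases hω : ω ∈ {ω | S ω ≤ a}
    · rw [Set.indicator_of_mem hω]
      have h2 : ∀ i : Fin n, t - X i ω ≤ g (X i ω) := fun i => le_max_left _ _
      have h3 : (n:ℝ) * t - S ω ≤ ∑ i, g (X i ω) := by
        have := Finset.sum_le_sum (fun i (_ : i ∈ Finset.univ) => h2 i)
        calc (n:ℝ) * t - S ω = ∑ i : Fin n, (t - X i ω) := by
              rw [Finset.sum_sub_distrib, Finset.sum_const, Finset.card_univ,
                Fintype.card_fin, hS]
              simp [nsmul_eq_mul]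
          _ ≤ _ := this
      calc (1:ℝ) ≤ K * (n * t - a) := h1
        _ ≤ K * ((n:ℝ) * t - S ω) := by
            apply mul_le_mul_of_nonneg_left _ hK
            have : S ω ≤ a := hω
            linarith
        _ ≤ K * ∑ i, g (X i ω) := mul_le_mul_of_nonneg_left h3 hK
    · rw [Set.indicator_of_notMem hω]
      have : 0 ≤ ∑ i, g (X i ω) := Finset.sum_nonneg (fun i _ => hgnn _)
      positivity
  have haei : ∀ i : Fin n, ∀ᵐ ω ∂(ℙ : Measure Ω), X i ω ∈ Icc (0:ℝ) 1 := by
    intro i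
    rw [ae_iff]
    have : {ω | ¬ X i ω ∈ Icc (0:ℝ) 1} = X i ⁻¹' (Icc (0:ℝ) 1)ᶜ := rfl
    rw [this, ← Measure.map_apply (hXm i) (measurableSet_Icc.compl), hXd i,
      unif_eq_Icc, Measure.restrict_apply (measurableSet_Icc.compl)]
    simp
  have hint_g : ∀ i : Fin n, Integrable (fun ω => g (X i ω)) (ℙ : Measure Ω) := by
    intro i
    apply Integrable.mono' (integrable_const (1:ℝ))
      ((hgc.measurable.comp (hXm i)).aestronglyMeasurable)
    filter_upwards [haei i] with ω hω
    simp only [Function.comp_apply, Real.norm_eq_abs]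
    rw [abs_of_nonneg (hgnn _)]
    have : t - X i ω ≤ 1 := by linarith [hω.1]
    exact max_le this (by norm_num)
  have hint_sum : Integrable (fun ω => K * ∑ i, g (X i ω)) (ℙ : Measure Ω) :=
    (integrable_finset_sum _ (fun i _ => hint_g i)).const_mul K
  have hind : Integrable (Set.indicator {ω | S ω ≤ a} (fun _ => (1:ℝ))) (ℙ : Measure Ω) :=
    (integrable_const (1:ℝ)).indicator hEmeas
  have hmapint : ∀ i : Fin n, ∫ ω, g (X i ω) ∂(ℙ : Measure Ω) = t^2/2 := by
    intro i
    have : ∫ ω, g (X i ω) ∂(ℙ : Measure Ω) = ∫ x, g x ∂(Measure.map (X i) ℙ) :=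
      (integral_map (hXm i).aemeasurable hgc.aestronglyMeasurable).symm
    rw [this, hXd i]
    exact integral_gmax t ht0 ht1
  calc (ℙ {ω | S ω ≤ a}).toReal
      = ∫ ω, Set.indicator {ω | S ω ≤ a} (fun _ => (1:ℝ)) ω ∂(ℙ : Measure Ω) :=
        (MeasureTheory.integral_indicator_one hEmeas).symm
    _ ≤ ∫ ω, K * ∑ i, g (X i ω) ∂(ℙ : Measure Ω) := integral_mono hind hint_sum key
    _ = K * ∑ i : Fin n, ∫ ω, g (X i ω) ∂(ℙ : Measure Ω) := by
        rw [MeasureTheory.integral_const_mul, integral_finset_sum _ (fun i _ => hint_g i)]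
    _ = K * n * (t^2/2) := by
        rw [Finset.sum_congr rfl (fun i _ => hmapint i), Finset.sum_const,
          Finset.card_univ, Fintype.card_fin]
        simp [nsmul_eq_mul]; ring

lemma map_one_sub_unif :
    Measure.map (fun x : ℝ => 1 - x) (unif 0 1) = unif 0 1 := by
  have h : (fun x : ℝ => 1 - x) = fun x : ℝ => (-1) * x + 1 := by funext x; ring
  have hpre : ((fun x : ℝ => (-1) * x + 1) ⁻¹' (Icc 0 1)) = Icc (0:ℝ) 1 := by
    ext x
    simp only [mem_preimage, mem_Icc]
    constructor <;> rintro ⟨h1, h2⟩ <;> constructor <;> linarith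
  rw [unif_eq_Icc, h]
  nth_rewrite 1 [← hpre]
  rw [map_affine (-1) 1 (by norm_num) measurableSet_Icc]
  norm_num

lemma tail_high {Ω : Type} [MeasureSpace Ω] (hP : IsProbabilityMeasure (ℙ : Measure Ω))
    {n : ℕ} (X : Fin n → Ω → ℝ) (hXm : ∀ i, Measurable (X i))
    (hXd : ∀ i, Measure.map (X i) ℙ = unif 0 1)
    (c t K : ℝ) (ht0 : 0 ≤ t) (ht1 : t ≤ 1) (hK : 0 ≤ K)
    (h1 : 1 ≤ K * (n * t - (n - c))) :
    (ℙ {ω | c ≤ ∑ i, X i ω}).toReal ≤ K * n * (t^2/2) := by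
  set X' : Fin n → Ω → ℝ := fun i ω => 1 - X i ω with hX'
  have hX'm : ∀ i, Measurable (X' i) := fun i => (measurable_const.sub (hXm i))
  have hX'd : ∀ i, Measure.map (X' i) ℙ = unif 0 1 := by
    intro i
    have : X' i = (fun x : ℝ => 1 - x) ∘ X i := rfl
    rw [this, ← Measure.map_map (by fun_prop) (hXm i), hXd i, map_one_sub_unif]
  have hset : {ω | c ≤ ∑ i, X i ω} = {ω | ∑ i, X' i ω ≤ (n : ℝ) - c} := by
    ext ω
    simp only [mem_setOf_eq, hX']
    rw [Finset.sum_sub_distrib, Finset.sum_const, Finset.card_univ, Fintype.card_fin]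
    constructor <;> intro h <;> [skip; skip] <;> simp [nsmul_eq_mul] at * <;> linarith
  rw [hset]
  exact tail_low hP X' hX'm hX'd ((n : ℝ) - c) t K ht0 ht1 hK h1

end Tail

set_option maxHeartbeats 1000000 in
theorem stmt18 (n : ℕ) (hn : 3 ≤ n) (a b : ℝ) (ha : 0 ≤ a) (hb : 0 ≤ b)
    (hab : a + b ≤ (n : ℝ)) :
    IsLeast {r : ℝ | ∃ (Ω : Type) (_ : MeasureSpace Ω),
        IsProbabilityMeasure (ℙ : Measure Ω) ∧
        ∃ X : Fin n → Ω → ℝ, (∀ i, Measurable (X i)) ∧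
          (∀ i, Measure.map (X i) ℙ = unif 0 1) ∧
          r = (ℙ {ω | ∑ i, X i ω ∈ Set.Ioo a (a + b)}).toReal}
      (max (2 * b / n - 1) 0) := by
  have hn0 : (0:ℝ) < n := by
    have : (3:ℝ) ≤ n := by exact_mod_cast hn
    linarith
  constructor
  · -- membership: explicit construction
    rcases le_or_gt b ((n:ℝ)/2) with hbn | hbn
    · -- small b : probability 0
      set t : ℝ := min (2*a/n) 1 with hts
      have ht0 : 0 ≤ t := le_min (by positivity) (by norm_num)
      have ht1 : t ≤ 1 := min_le_right _ _
      refine ⟨ℝ, @MeasureSpace.mk ℝ Real.measurableSpace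
        (volume.restrict (Set.Ico 0 1)), ?_, fun i => Xc n t t i.val, ?_, ?_, ?_⟩
      · refine ⟨?_⟩
        show (volume.restrict (Set.Ico (0:ℝ) 1)) Set.univ = 1
        rw [Measure.restrict_apply_univ, Real.volume_Ico]
        norm_num
      · intro i
        exact measurable_Xc n t t i.val
      · intro i
        exact map_Xc n i.val t t ht0 le_rfl ht1
      · have hmax : max (2*b/(n:ℝ) - 1) 0 = 0 := by
          apply max_eq_right
          rw [sub_nonpos, div_le_one hn0]
          linarith
        have hv1 : t*((n:ℝ)/2) ≤ a := by
          rcases le_total (2*a/n) 1 with hc | hc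
          · have htt : t = 2*a/n := min_eq_left hc
            rw [htt]
            exact le_of_eq (by field_simp <;> ring)
          · have htt : t = 1 := min_eq_right hc
            rw [le_div_iff₀ hn0] at hc
            rw [htt]
            linarith
        have hv3 : a + b ≤ (n:ℝ)*t + (1-t)*((n:ℝ)/2) := by
          have hexp : (n:ℝ)*t + (1-t)*((n:ℝ)/2) = (n:ℝ)/2 + t*((n:ℝ)/2) := by ring
          rcases le_total (2*a/n) 1 with hc | hc
          · have htt : t = 2*a/n := min_eq_left hc
            have heq : t*((n:ℝ)/2) = a := by
              rw [htt]
              field_simp <;> ring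
            rw [hexp, heq]
            linarith
          · have htt : t = 1 := min_eq_right hc
            rw [hexp, htt]
            linarith
        have hE : (volume.restrict (Set.Ico (0:ℝ) 1))
            {ω : ℝ | ∑ i : Fin n, Xc n t t i.val ω ∈ Set.Ioo a (a+b)} = 0 := by
          rw [Measure.restrict_apply' measurableSet_Ico]
          have hempty : {ω : ℝ | ∑ i : Fin n, Xc n t t i.val ω ∈ Set.Ioo a (a+b)}
              ∩ Set.Ico (0:ℝ) 1 = ∅ := by
            ext ω
            simp only [Set.mem_inter_iff, Set.mem_setOf_eq, Set.mem_Ioo, Set.mem_empty_iff_false,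
              iff_false, not_and, Set.mem_Ico]
            intro hmem
            exfalso
            rw [sum_Xc n hn t t ω] at hmem
            split_ifs at hmem with h1
            · linarith [hmem.1, hmem.2, hv1]
            · linarith [hmem.1, hmem.2, hv3]
          rw [hempty]
          exact measure_empty
        rw [hmax]
        show (0:ℝ) = ((volume.restrict (Set.Ico (0:ℝ) 1))
          {ω : ℝ | ∑ i : Fin n, Xc n t t i.val ω ∈ Set.Ioo a (a+b)}).toReal
        rw [hE]
        simp
    · -- large b : probability 2b/n - 1
      set t1 : ℝ := 2*a/n with ht1s
      set t2 : ℝ := 2*a/n + (2*b/n - 1) with ht2s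
      have hq : 0 < 2*b/(n:ℝ) - 1 := by
        rw [sub_pos, lt_div_iff₀ hn0]
        linarith
      have h0 : 0 ≤ t1 := by positivity
      have h12 : t1 ≤ t2 := by rw [ht1s, ht2s]; linarith
      have h21 : t2 ≤ 1 := by
        rw [ht2s]
        have e1 : 2*a/(n:ℝ) + (2*b/n - 1) = (2*a + 2*b)/n - 1 := by
          field_simp
          ring
        rw [e1, sub_le_iff_le_add, div_le_iff₀ hn0]
        linarith
      refine ⟨ℝ, @MeasureSpace.mk ℝ Real.measurableSpace
        (volume.restrict (Set.Ico 0 1)), ?_, fun i => Xc n t1 t2 i.val, ?_, ?_, ?_⟩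
      · refine ⟨?_⟩
        show (volume.restrict (Set.Ico (0:ℝ) 1)) Set.univ = 1
        rw [Measure.restrict_apply_univ, Real.volume_Ico]
        norm_num
      · intro i
        exact measurable_Xc n t1 t2 i.val
      · intro i
        exact map_Xc n i.val t1 t2 h0 h12 h21
      · have hv1 : t1*((n:ℝ)/2) = a := by
          rw [ht1s]; field_simp
        have hanb : a ≤ (n:ℝ) - b := by linarith
        have hv2a : a < (n:ℝ)*t1 + (t2-t1)*((n:ℝ)/2) := by
          have : (t2 - t1)*((n:ℝ)/2) = b - n/2 := by
            rw [ht2s, ht1s]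
            field_simp
            ring
          have hnt1 : (n:ℝ)*t1 = 2*a := by rw [ht1s]; field_simp
          rw [this, hnt1]
          linarith
        have hv2b : (n:ℝ)*t1 + (t2-t1)*((n:ℝ)/2) < a + b := by
          have : (t2 - t1)*((n:ℝ)/2) = b - n/2 := by
            rw [ht2s, ht1s]
            field_simp
            ring
          have hnt1 : (n:ℝ)*t1 = 2*a := by rw [ht1s]; field_simp
          rw [this, hnt1]
          linarith
        have hv3 : (n:ℝ)*t2 + (1-t2)*((n:ℝ)/2) = a + b := by
          have h2 : (n:ℝ)*t2 = 2*a + 2*b - n := by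
            rw [ht2s]
            field_simp <;> linarith
          linear_combination (1/2)*h2
        have hE : (volume.restrict (Set.Ico (0:ℝ) 1))
            {ω : ℝ | ∑ i : Fin n, Xc n t1 t2 i.val ω ∈ Set.Ioo a (a+b)}
            = ENNReal.ofReal (2*b/(n:ℝ) - 1) := by
          rw [Measure.restrict_apply' measurableSet_Ico]
          have hEset : {ω : ℝ | ∑ i : Fin n, Xc n t1 t2 i.val ω ∈ Set.Ioo a (a+b)}
              ∩ Set.Ico (0:ℝ) 1 = Set.Ico t1 t2 := by
            ext ω
            simp only [Set.mem_inter_iff, Set.mem_setOf_eq, Set.mem_Ioo, Set.mem_Ico]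
            rw [sum_Xc n hn t1 t2 ω]
            split_ifs with h1 h2
            · constructor
              · rintro ⟨⟨hlt, -⟩, -⟩
                exfalso
                rw [show t1*((n:ℝ)/2) = a from hv1] at hlt
                exact lt_irrefl a hlt
              · rintro ⟨hge, -⟩
                exact absurd h1 (not_lt.2 hge)
            · constructor
              · rintro ⟨-, ⟨hw0, -⟩⟩
                exact ⟨not_lt.1 h1, h2⟩
              · rintro ⟨hge, hlt⟩
                refine ⟨⟨hv2a, hv2b⟩, ⟨le_trans h0 hge, lt_of_lt_of_le hlt h21⟩⟩
            · constructor
              · rintro ⟨⟨-, hlt⟩, -⟩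
                exfalso
                rw [hv3] at hlt
                exact lt_irrefl _ hlt
              · rintro ⟨-, hlt⟩
                exact absurd (lt_of_lt_of_le hlt (le_refl t2)) h2
          rw [hEset, Real.volume_Ico]
          congr 1
          rw [ht2s, ht1s]
          ring
        rw [max_eq_left hq.le]
        show (2*b/(n:ℝ) - 1) = ((volume.restrict (Set.Ico (0:ℝ) 1))
          {ω : ℝ | ∑ i : Fin n, Xc n t1 t2 i.val ω ∈ Set.Ioo a (a+b)}).toReal
        rw [hE, ENNReal.toReal_ofReal hq.le]
  · -- lower bound
    rintro r ⟨Ω, mΩ, hP, X, hXm, hXd, hre⟩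
    haveI := hP
    have hr0 : 0 ≤ r := by rw [hre]; exact ENNReal.toReal_nonneg
    rcases le_or_gt (2*b/(n:ℝ) - 1) 0 with hq | hq
    · exact max_le (hq.trans hr0) hr0
    · rw [max_eq_left hq.le]
      have hbn : (n:ℝ)/2 < b := by
        rw [sub_pos, lt_div_iff₀ hn0] at hq
        linarith
      have han : a < (n:ℝ)/2 := by linarith
      obtain ⟨e, he0⟩ : ∃ e : ℝ, e = (n:ℝ) - (a+b) := ⟨_, rfl⟩
      have hen : e < (n:ℝ)/2 := by rw [he0]; linarith
      have he0' : 0 ≤ e := by rw [he0]; linarith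
      apply le_of_forall_pos_le_add
      intro ε hε
      obtain ⟨δ, hδ0, hδ1, hδ2, hδ3⟩ : ∃ δ : ℝ, 0 < δ ∧ δ ≤ (n:ℝ)/2 - a
          ∧ δ ≤ (n:ℝ)/2 - e ∧ δ ≤ (n:ℝ)*ε/2 :=
        ⟨min (min ((n:ℝ)/2 - a) ((n:ℝ)/2 - e)) ((n:ℝ)*ε/2),
          lt_min (lt_min (by linarith) (by linarith)) (by positivity),
          le_trans (min_le_left _ _) (min_le_left _ _),
          le_trans (min_le_left _ _) (min_le_right _ _), min_le_right _ _⟩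
      have hlow : (ℙ {ω | ∑ i, X i ω ≤ a}).toReal ≤ (2*a + δ)/n := by
        have hbd := tail_low hP X hXm hXd a (2*(a+δ)/n) (1/(a+2*δ))
          (by positivity) (by rw [div_le_one hn0]; linarith) (by positivity) ?_
        · refine hbd.trans ?_
          have expand : (1/(a+2*δ))*(n:ℝ)*((2*(a+δ)/n)^2/2) = 2*(a+δ)^2/(n*(a+2*δ)) := by
            field_simp
          rw [expand, div_le_div_iff₀ (by positivity) hn0]
          nlinarith [mul_nonneg (mul_nonneg ha hδ0.le) hn0.le]
        · have hnt : (n:ℝ)*(2*(a+δ)/n) = 2*(a+δ) := by field_simp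
          rw [hnt, show 2*(a+δ) - a = a + 2*δ by ring, one_div,
            inv_mul_cancel₀ (by positivity : a + 2*δ ≠ 0)]
      have hhigh : (ℙ {ω | a + b ≤ ∑ i, X i ω}).toReal ≤ (2*e + δ)/n := by
        have hbd := tail_high hP X hXm hXd (a+b) (2*(e+δ)/n) (1/(e+2*δ))
          (by positivity) (by rw [div_le_one hn0]; linarith) (by positivity) ?_
        · refine hbd.trans ?_
          have expand : (1/(e+2*δ))*(n:ℝ)*((2*(e+δ)/n)^2/2) = 2*(e+δ)^2/(n*(e+2*δ)) := by
            field_simp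
          rw [expand, div_le_div_iff₀ (by positivity) hn0]
          nlinarith [mul_nonneg (mul_nonneg he0' hδ0.le) hn0.le]
        · have hnt : (n:ℝ)*(2*(e+δ)/n) = 2*(e+δ) := by field_simp
          rw [hnt, show (n:ℝ) - (a+b) = e from he0.symm,
            show 2*(e+δ) - e = e + 2*δ by ring, one_div,
            inv_mul_cancel₀ (by positivity : e + 2*δ ≠ 0)]
      have hcover : (Set.univ : Set Ω) ⊆ {ω | ∑ i, X i ω ∈ Set.Ioo a (a+b)}
          ∪ ({ω | ∑ i, X i ω ≤ a} ∪ {ω | a + b ≤ ∑ i, X i ω}) := by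
        intro ω _
        rcases le_or_gt (∑ i, X i ω) a with h1 | h1
        · exact Or.inr (Or.inl h1)
        · rcases le_or_gt (a+b) (∑ i, X i ω) with h2 | h2
          · exact Or.inr (Or.inr h2)
          · exact Or.inl ⟨h1, h2⟩
      have h1' : (1:ℝ) ≤ r + ((2*a+δ)/n + (2*e+δ)/n) := by
        have hle : (ℙ (Set.univ : Set Ω)) ≤ ℙ {ω | ∑ i, X i ω ∈ Set.Ioo a (a+b)}
            + (ℙ {ω | ∑ i, X i ω ≤ a} + ℙ {ω | a + b ≤ ∑ i, X i ω}) := by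
          refine le_trans (measure_mono hcover) ?_
          refine le_trans (measure_union_le _ _) ?_
          exact add_le_add_right (measure_union_le _ _) _
        calc (1:ℝ)
            = (ℙ (Set.univ : Set Ω)).toReal := by
              rw [measure_univ]; exact ENNReal.toReal_one.symm
          _ ≤ (ℙ {ω | ∑ i, X i ω ∈ Set.Ioo a (a+b)}
              + (ℙ {ω | ∑ i, X i ω ≤ a} + ℙ {ω | a + b ≤ ∑ i, X i ω})).toReal := by
            apply ENNReal.toReal_mono _ hle
            finiteness
          _ = (ℙ {ω | ∑ i, X i ω ∈ Set.Ioo a (a+b)}).toReal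
              + ((ℙ {ω | ∑ i, X i ω ≤ a}).toReal
                + (ℙ {ω | a + b ≤ ∑ i, X i ω}).toReal) := by
            rw [ENNReal.toReal_add (by finiteness) (by finiteness),
              ENNReal.toReal_add (by finiteness) (by finiteness)]
          _ ≤ r + ((2*a+δ)/n + (2*e+δ)/n) := by
            rw [← hre]
            exact add_le_add le_rfl (add_le_add hlow hhigh)
      have hsplit2 : (2*a+δ)/(n:ℝ) + (2*e+δ)/n = 2 - 2*b/n + 2*δ/n := by
        rw [he0]
        field_simp
        ring
      have h2δ : 2*δ/(n:ℝ) ≤ ε := by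
        rw [div_le_iff₀ hn0]
        linarith
      rw [hsplit2] at h1'
      linarith
end
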